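/- arXiv:0808.1239 — 2 statements merged into one kernel-verified Lean document; each statement's English description precedes it below -/
import Mathlib

section
/- For any principal ideal domain R, letting P(R) denote the subgroup of SL₂(R[t]) of matrices whose lower-left entry is divisible by t, the natural homomorphism from the amalgamated free product SL₂(R[t]) *_{P(R)} SL₂(R[t]) to SL₂(R[t,t⁻¹]) — induced on the first free factor by the inclusion and on the second free factor by i₂, with both edge maps the inclusion P(R) ↪ SL₂(R[t]) — is an isomorphism of groups. -/
open Matrix MatrixGroups Polynomial LaurentPolynomial

namespace Paper

variable (R : Type) [CommRing R]

lemma entry00 (A B : SL(2, R)) : (↑(A * B) : Matrix (Fin 2) (Fin 2) R) 0 0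
    = A.1 0 0 * B.1 0 0 + A.1 0 1 * B.1 1 0 := by
  simp [Matrix.SpecialLinearGroup.coe_mul, Matrix.mul_apply, Fin.sum_univ_two]

lemma entry01 (A B : SL(2, R)) : (↑(A * B) : Matrix (Fin 2) (Fin 2) R) 0 1
    = A.1 0 0 * B.1 0 1 + A.1 0 1 * B.1 1 1 := by
  simp [Matrix.SpecialLinearGroup.coe_mul, Matrix.mul_apply, Fin.sum_univ_two]

lemma entry10 (A B : SL(2, R)) : (↑(A * B) : Matrix (Fin 2) (Fin 2) R) 1 0
    = A.1 1 0 * B.1 0 0 + A.1 1 1 * B.1 1 0 := by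
  simp [Matrix.SpecialLinearGroup.coe_mul, Matrix.mul_apply, Fin.sum_univ_two]

lemma entry11 (A B : SL(2, R)) : (↑(A * B) : Matrix (Fin 2) (Fin 2) R) 1 1
    = A.1 1 0 * B.1 0 1 + A.1 1 1 * B.1 1 1 := by
  simp [Matrix.SpecialLinearGroup.coe_mul, Matrix.mul_apply, Fin.sum_univ_two]

/-- The subgroup of upper triangular matrices in `SL₂(R)`. -/
def Bsub : Subgroup (Matrix.SpecialLinearGroup (Fin 2) R) where
  carrier := {A | A.1 1 0 = 0}
  one_mem' := by
    show ((1 : SL(2, R)) : Matrix (Fin 2) (Fin 2) R) 1 0 = 0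
    simp [Matrix.SpecialLinearGroup.coe_one, Matrix.one_apply]
  mul_mem' {A B} hA hB := by
    show (↑(A * B) : Matrix (Fin 2) (Fin 2) R) 1 0 = 0
    rw [entry10]
    simp only [Set.mem_setOf_eq] at hA hB
    rw [hA, hB]; ring
  inv_mem' {A} hA := by
    show (↑(A⁻¹) : Matrix (Fin 2) (Fin 2) R) 1 0 = 0
    rw [Matrix.SpecialLinearGroup.SL2_inv_expl A]
    simp only [Set.mem_setOf_eq] at hA
    simp [hA]

/-- The subgroup of matrices in `SL₂(R[t])` whose lower-left entry is divisible by `t`. -/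
def Psub : Subgroup (Matrix.SpecialLinearGroup (Fin 2) (Polynomial R)) where
  carrier := {A | (X : R[X]) ∣ A.1 1 0}
  one_mem' := by
    show (X : R[X]) ∣ ((1 : SL(2, R[X])) : Matrix (Fin 2) (Fin 2) R[X]) 1 0
    simp [Matrix.SpecialLinearGroup.coe_one, Matrix.one_apply]
  mul_mem' {A B} hA hB := by
    show (X : R[X]) ∣ (↑(A * B) : Matrix (Fin 2) (Fin 2) R[X]) 1 0
    rw [entry10]
    exact dvd_add (hA.mul_right _) (hB.mul_left _)
  inv_mem' {A} hA := by
    show (X : R[X]) ∣ (↑(A⁻¹) : Matrix (Fin 2) (Fin 2) R[X]) 1 0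
    rw [Matrix.SpecialLinearGroup.SL2_inv_expl A]
    simp only [Set.mem_setOf_eq] at hA
    simpa using hA.neg_right

/-- The elementary matrix `(1 r; 0 1)`. -/
def elUp (r : R) : SL(2, R) :=
  ⟨!![1, r; 0, 1], by simp [Matrix.det_fin_two_of]⟩

/-- The elementary matrix `(1 0; r 1)`. -/
def elLow (r : R) : SL(2, R) :=
  ⟨!![1, 0; r, 1], by simp [Matrix.det_fin_two_of]⟩

/-- The subgroup `E₂(R)` of `SL₂(R)` generated by the elementary matrices. -/
def Esub : Subgroup (Matrix.SpecialLinearGroup (Fin 2) R) :=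
  Subgroup.closure {A | (∃ r : R, A = elUp R r) ∨ (∃ r : R, A = elLow R r)}

variable {R}

lemma divX_X_mul (p : R[X]) : (X * p).divX = p := by
  ext n
  rw [Polynomial.coeff_divX, Polynomial.coeff_X_mul]

lemma X_mul_divX {p : R[X]} (h : (X : R[X]) ∣ p) : X * p.divX = p := by
  obtain ⟨c, rfl⟩ := h
  rw [divX_X_mul]

lemma X_mul_cancel {p q : R[X]} (h : X * p = X * q) : p = q := by
  ext n
  have := congrArg (fun r => Polynomial.coeff r (n + 1)) h
  simpa [Polynomial.coeff_X_mul] using this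

variable (R)

/-- The matrix underlying `conjP`. -/
noncomputable def conjMat (A : SL(2, R[X])) : Matrix (Fin 2) (Fin 2) R[X] :=
  !![A.1 0 0, X * A.1 0 1; (A.1 1 0).divX, A.1 1 1]

lemma conjMat_det {A : SL(2, R[X])} (hA : (X : R[X]) ∣ A.1 1 0) : (conjMat R A).det = 1 := by
  rw [conjMat, Matrix.det_fin_two_of]
  have h : X * (A.1 1 0).divX = A.1 1 0 := X_mul_divX hA
  have hd : A.1 0 0 * A.1 1 1 - A.1 0 1 * A.1 1 0 = 1 := by
    rw [← Matrix.det_fin_two]; exact A.2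
  calc A.1 0 0 * A.1 1 1 - X * A.1 0 1 * (A.1 1 0).divX
      = A.1 0 0 * A.1 1 1 - A.1 0 1 * (X * (A.1 1 0).divX) := by ring
    _ = 1 := by rw [h]; exact hd

lemma conjMat_mul {A B : SL(2, R[X])} (hA : (X : R[X]) ∣ A.1 1 0)
    (hB : (X : R[X]) ∣ B.1 1 0) :
    conjMat R (A * B) = conjMat R A * conjMat R B := by
  have h00 : A.1 0 0 * B.1 0 0 + A.1 0 1 * B.1 1 0
      = A.1 0 0 * B.1 0 0 + (X * A.1 0 1) * (B.1 1 0).divX := by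
    rw [show (X * A.1 0 1) * (B.1 1 0).divX = A.1 0 1 * (X * (B.1 1 0).divX) by ring,
      X_mul_divX hB]
  have h01 : X * (A.1 0 0 * B.1 0 1 + A.1 0 1 * B.1 1 1)
      = A.1 0 0 * (X * B.1 0 1) + (X * A.1 0 1) * B.1 1 1 := by ring
  have h10 : (A.1 1 0 * B.1 0 0 + A.1 1 1 * B.1 1 0).divX
      = (A.1 1 0).divX * B.1 0 0 + A.1 1 1 * (B.1 1 0).divX := by
    apply X_mul_cancel
    rw [X_mul_divX (dvd_add (hA.mul_right _) (hB.mul_left _))]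
    rw [mul_add,
      show X * ((A.1 1 0).divX * B.1 0 0) = (X * (A.1 1 0).divX) * B.1 0 0 by ring,
      X_mul_divX hA,
      show X * (A.1 1 1 * (B.1 1 0).divX) = A.1 1 1 * (X * (B.1 1 0).divX) by ring,
      X_mul_divX hB]
  have h11 : A.1 1 0 * B.1 0 1 + A.1 1 1 * B.1 1 1
      = (A.1 1 0).divX * (X * B.1 0 1) + A.1 1 1 * B.1 1 1 := by
    rw [show (A.1 1 0).divX * (X * B.1 0 1) = (X * (A.1 1 0).divX) * B.1 0 1 by ring,
      X_mul_divX hA]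
  rw [conjMat, conjMat, conjMat, entry00, entry01, entry10, entry11,
    Matrix.mul_fin_two, h10]
  rw [show (A.1 1 0 * B.1 0 1 + A.1 1 1 * B.1 1 1) = (A.1 1 0).divX * (X * B.1 0 1) + A.1 1 1 * B.1 1 1 from h11]
  rw [show (A.1 0 0 * B.1 0 0 + A.1 0 1 * B.1 1 0) = A.1 0 0 * B.1 0 0 + (X * A.1 0 1) * (B.1 1 0).divX from h00]
  rw [show X * (A.1 0 0 * B.1 0 1 + A.1 0 1 * B.1 1 1) = A.1 0 0 * (X * B.1 0 1) + (X * A.1 0 1) * B.1 1 1 from h01]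

/-- The second edge embedding `P → SL₂(R[t])`, conjugation by `diag(1,t)⁻¹` inside
`SL₂(R[t,t⁻¹])`: `(a, b; t·c, d) ↦ (a, t·b; c, d)`. -/
noncomputable def conjP : ↥(Psub R) →* SL(2, R[X]) where
  toFun A := ⟨conjMat R A.1, conjMat_det R A.2⟩
  map_one' := by
    apply Subtype.ext
    show conjMat R 1 = 1
    rw [conjMat]
    have h00 : ((1 : SL(2, R[X])) : Matrix (Fin 2) (Fin 2) R[X]) 0 0 = 1 := by
      rw [Matrix.SpecialLinearGroup.coe_one]; simp [Matrix.one_apply]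
    have h01 : ((1 : SL(2, R[X])) : Matrix (Fin 2) (Fin 2) R[X]) 0 1 = 0 := by
      rw [Matrix.SpecialLinearGroup.coe_one]; simp [Matrix.one_apply]
    have h10 : ((1 : SL(2, R[X])) : Matrix (Fin 2) (Fin 2) R[X]) 1 0 = 0 := by
      rw [Matrix.SpecialLinearGroup.coe_one]; simp [Matrix.one_apply]
    have h11 : ((1 : SL(2, R[X])) : Matrix (Fin 2) (Fin 2) R[X]) 1 1 = 1 := by
      rw [Matrix.SpecialLinearGroup.coe_one]; simp [Matrix.one_apply]
    rw [h00, h01, h10, h11, mul_zero, Polynomial.divX_zero, ← Matrix.one_fin_two]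
  map_mul' A B := by
    apply Subtype.ext
    show conjMat R (A.1 * B.1) = conjMat R A.1 * conjMat R B.1
    exact conjMat_mul R A.2 B.2

/-- The diagonal matrix `diag(1, t)` as a unit of the ring of 2×2 matrices over `R[t,t⁻¹]`. -/
noncomputable def DT : (Matrix (Fin 2) (Fin 2) (LaurentPolynomial R))ˣ where
  val := Matrix.diagonal ![1, LaurentPolynomial.T 1]
  inv := Matrix.diagonal ![1, LaurentPolynomial.T (-1)]
  val_inv := by
    rw [Matrix.diagonal_mul_diagonal]
    have : (fun i => (![1, LaurentPolynomial.T 1] : Fin 2 → LaurentPolynomial R) i *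
        ![1, LaurentPolynomial.T (-1)] i) = fun _ => (1 : LaurentPolynomial R) := by
      funext i
      fin_cases i
      · simp
      · show LaurentPolynomial.T 1 * LaurentPolynomial.T (-1) = 1
        rw [← LaurentPolynomial.T_add]; simp
    rw [this, Matrix.diagonal_one]
  inv_val := by
    rw [Matrix.diagonal_mul_diagonal]
    have : (fun i => (![1, LaurentPolynomial.T (-1)] : Fin 2 → LaurentPolynomial R) i *
        ![1, LaurentPolynomial.T 1] i) = fun _ => (1 : LaurentPolynomial R) := by
      funext i
      fin_cases i
      · simp
      · show LaurentPolynomial.T (-1) * LaurentPolynomial.T 1 = 1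
        rw [← LaurentPolynomial.T_add]; simp
    rw [this, Matrix.diagonal_one]

lemma DT_conj_det (M : Matrix (Fin 2) (Fin 2) (LaurentPolynomial R)) :
    (((DT R) : Matrix (Fin 2) (Fin 2) (LaurentPolynomial R)) * M * ((DT R)⁻¹).val).det = M.det := by
  rw [Matrix.det_mul, Matrix.det_mul]
  have h : ((DT R) : Matrix (Fin 2) (Fin 2) (LaurentPolynomial R)).det *
      ((DT R)⁻¹ : (Matrix (Fin 2) (Fin 2) (LaurentPolynomial R))ˣ).1.det = 1 := by
    rw [← Matrix.det_mul, Units.mul_inv, Matrix.det_one]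
  calc ((DT R) : Matrix (Fin 2) (Fin 2) (LaurentPolynomial R)).det * M.det * (((DT R)⁻¹).val).det
      = ((DT R) : Matrix (Fin 2) (Fin 2) (LaurentPolynomial R)).det * (((DT R)⁻¹).val).det * M.det := by ring
    _ = M.det := by rw [h, one_mul]

/-- The homomorphism `i₂ : SL₂(R[t]) → SL₂(R[t,t⁻¹])`, `A ↦ diag(1,t)·A·diag(1,t⁻¹)`. -/
noncomputable def i₂SL : SL(2, Polynomial R) →* SL(2, LaurentPolynomial R) where
  toFun A := ⟨(DT R : Matrix (Fin 2) (Fin 2) (LaurentPolynomial R)) *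
      A.1.map Polynomial.toLaurent * ↑(DT R)⁻¹, by
    rw [DT_conj_det]
    have : (A.1.map (Polynomial.toLaurent : R[X] → LaurentPolynomial R)).det
        = Polynomial.toLaurent A.1.det := by
      rw [← RingHom.mapMatrix_apply, ← RingHom.map_det]
    rw [this, A.2, _root_.map_one]⟩
  map_one' := by
    apply Subtype.ext
    show (DT R : Matrix (Fin 2) (Fin 2) (LaurentPolynomial R)) *
      ((1 : SL(2, R[X])).1.map Polynomial.toLaurent) * ((DT R)⁻¹).val = 1
    rw [Matrix.SpecialLinearGroup.coe_one]
    rw [show ((1 : Matrix (Fin 2) (Fin 2) R[X]).map (Polynomial.toLaurent : R[X] → _)) = 1 from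
      Matrix.map_one _ (map_zero _) (map_one _)]
    rw [mul_one, Units.mul_inv]
  map_mul' A B := by
    apply Subtype.ext
    show (DT R : Matrix (Fin 2) (Fin 2) (LaurentPolynomial R)) *
        ((A * B).1.map Polynomial.toLaurent) * ((DT R)⁻¹).val = _
    rw [Matrix.SpecialLinearGroup.coe_mul]
    rw [show ((A.1 * B.1).map (Polynomial.toLaurent : R[X] → _))
        = A.1.map Polynomial.toLaurent * B.1.map Polynomial.toLaurent from
      Matrix.map_mul]
    show _ = ((DT R : Matrix (Fin 2) (Fin 2) (LaurentPolynomial R)) *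
        A.1.map Polynomial.toLaurent * ((DT R)⁻¹).val) *
      ((DT R : Matrix (Fin 2) (Fin 2) (LaurentPolynomial R)) *
        B.1.map Polynomial.toLaurent * ((DT R)⁻¹).val)
    simp only [mul_assoc, Units.inv_mul_cancel_left]

end Paper
namespace Paper

variable (R : Type) [CommRing R]

lemma T_conj (f : LaurentPolynomial R) :
    LaurentPolynomial.T 1 * f * LaurentPolynomial.T (-1) = f := by
  rw [mul_assoc, LaurentPolynomial.T_mul, LaurentPolynomial.mul_T_assoc]
  simp

/-- Compatibility: `i₂ ∘ conjP` is the canonical inclusion on `P`. -/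
lemma i₂SL_conjP (A : ↥(Psub R)) :
    i₂SL R (conjP R A) = Matrix.SpecialLinearGroup.map Polynomial.toLaurent A.1 := by
  have hA : (X : R[X]) ∣ A.1.1 1 0 := A.2
  apply Subtype.ext
  show (DT R : Matrix (Fin 2) (Fin 2) (LaurentPolynomial R)) *
      (conjMat R A.1).map Polynomial.toLaurent * ((DT R)⁻¹).val
    = (Polynomial.toLaurent : R[X] →+* _).mapMatrix A.1.1
  rw [RingHom.mapMatrix_apply]
  have hD : (DT R : Matrix (Fin 2) (Fin 2) (LaurentPolynomial R))
      = Matrix.diagonal ![1, LaurentPolynomial.T 1] := rfl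
  have hD' : ((DT R)⁻¹ : (Matrix (Fin 2) (Fin 2) (LaurentPolynomial R))ˣ).val
      = Matrix.diagonal ![1, LaurentPolynomial.T (-1)] := rfl
  rw [hD, hD', ← Matrix.ext_iff]
  intro i j
  rw [Matrix.mul_diagonal, Matrix.diagonal_mul, Matrix.map_apply, Matrix.map_apply]
  fin_cases i <;> fin_cases j <;>
    simp only [conjMat, Fin.zero_eta, Fin.mk_one, Fin.isValue, id_eq,
      Matrix.cons_val', Matrix.cons_val_zero, Matrix.cons_val_one, Matrix.head_cons,
      Matrix.empty_val', Matrix.cons_val_fin_one, Matrix.head_fin_const, Matrix.of_apply]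
  · rw [one_mul, mul_one]
  · rw [one_mul, _root_.map_mul, Polynomial.toLaurent_X, mul_comm (LaurentPolynomial.T 1),
      LaurentPolynomial.mul_T_assoc]
    simp
  · rw [mul_one, ← Polynomial.toLaurent_X, ← _root_.map_mul, X_mul_divX hA]
  · exact T_conj R _

end Paper
namespace Paper

variable (R : Type) [CommRing R]

/-- The two edge embeddings of `P` into the two copies of `SL₂(R[t])`: the first is the
inclusion, the second is the inclusion conjugated by `diag(1,t)` (i.e. the identification of
`P` with a subgroup of the second vertex group of the tree of groups). -/
noncomputable def edgesP : Bool → (↥(Psub R) →* SL(2, Polynomial R))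
  | true => (Psub R).subtype
  | false => conjP R

/-- On the first free factor, the canonical inclusion `SL₂(R[t]) → SL₂(R[t,t⁻¹])`;
on the second free factor, the map `i₂`. -/
noncomputable def legsP : Bool → (SL(2, Polynomial R) →* SL(2, LaurentPolynomial R))
  | true => Matrix.SpecialLinearGroup.map Polynomial.toLaurent
  | false => i₂SL R

lemma compatP : ∀ b, (legsP R b).comp (edgesP R b)
    = (Matrix.SpecialLinearGroup.map (Polynomial.toLaurent : R[X] →+* LaurentPolynomial R)).comp
        (Psub R).subtype := by
  intro b
  cases b
  · exact MonoidHom.ext fun A => i₂SL_conjP R A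
  · rfl

/-- The natural homomorphism from the amalgamated free product
`SL₂(R[t]) *_P SL₂(R[t])` to `SL₂(R[t,t⁻¹])`. -/
noncomputable def amalgamToSL : Monoid.PushoutI (edgesP R) →* SL(2, LaurentPolynomial R) :=
  Monoid.PushoutI.lift (legsP R)
    ((Matrix.SpecialLinearGroup.map (Polynomial.toLaurent : R[X] →+* LaurentPolynomial R)).comp
      (Psub R).subtype)
    (compatP R)

end Paper

namespace Amalg
open Paper

variable {R : Type} [CommRing R]

local notation "LL" => LaurentPolynomial R

instance : CoeFun LL (fun _ => ℤ → R) := ⟨fun f => f.coeff⟩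

lemma coeff_mul_lt {f g : LL} {k l : ℤ} (hf : ∀ n < k, f n = 0) (hg : ∀ n < l, g n = 0)
    {m : ℤ} (hm : m < k + l) : (f * g) m = 0 := by
  rw [AddMonoidAlgebra.coeff_mul]
  simp only [Finsupp.sum]
  refine Finset.sum_eq_zero fun a₁ ha₁ => Finset.sum_eq_zero fun a₂ ha₂ => ?_
  have h₁ : k ≤ a₁ := le_of_not_gt fun h => (Finsupp.mem_support_iff.mp ha₁) (hf _ h)
  have h₂ : l ≤ a₂ := le_of_not_gt fun h => (Finsupp.mem_support_iff.mp ha₂) (hg _ h)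
  rw [if_neg (by omega)]

lemma coeff_mul_min {f g : LL} {k l : ℤ} (hf : ∀ n < k, f n = 0) (hg : ∀ n < l, g n = 0) :
    (f * g) (k + l) = f k * g l := by
  rw [AddMonoidAlgebra.coeff_mul]
  simp only [Finsupp.sum]
  rw [Finset.sum_eq_single k]
  · rw [Finset.sum_eq_single l]
    · rw [if_pos rfl]
    · intro a₂ ha₂ hne
      exact if_neg (by omega)
    · intro hl
      rw [if_pos rfl, Finsupp.notMem_support_iff.mp hl, mul_zero]
  · intro a₁ ha₁ hne
    have h₁ : k ≤ a₁ := le_of_not_gt fun h => (Finsupp.mem_support_iff.mp ha₁) (hf _ h)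
    refine Finset.sum_eq_zero fun a₂ ha₂ => ?_
    have h₂ : l ≤ a₂ := le_of_not_gt fun h => (Finsupp.mem_support_iff.mp ha₂) (hg _ h)
    exact if_neg (by omega)
  · intro hk
    refine Finset.sum_eq_zero fun a₂ ha₂ => ?_
    rw [Finsupp.notMem_support_iff.mp hk, zero_mul]
    split <;> rfl

lemma toLaurent_coeff_neg (p : R[X]) {n : ℤ} (hn : n < 0) :
    (Polynomial.toLaurent p) n = 0 := by
  rw [Polynomial.toLaurent_apply]
  exact Finsupp.mapDomain_notin_range _ _ (by rintro ⟨m, rfl⟩; omega)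

lemma toLaurent_coeff_zero (p : R[X]) : (Polynomial.toLaurent p) 0 = p.coeff 0 := by
  rw [Polynomial.toLaurent_apply]
  have h0 : ((0 : ℕ) : ℤ) = 0 := rfl
  rw [← h0]
  show Finsupp.mapDomain Nat.cast p.toFinsupp.coeff _ = _
  rw [Finsupp.mapDomain_apply Nat.cast_injective]
  rfl

lemma T_mul_coeff (a : ℤ) (f : LL) (m : ℤ) :
    ((LaurentPolynomial.T a : LL) * f) m = f (m - a) := by
  have hT : (LaurentPolynomial.T a : LL) = AddMonoidAlgebra.single a 1 := rfl
  rw [hT, AddMonoidAlgebra.coeff_single_mul_apply, one_mul]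
  congr 1
  ring

/-- All entries of `M` have `t`-adic order at least `k`. -/
def OrdGE (k : ℤ) (M : Matrix (Fin 2) (Fin 2) LL) : Prop :=
  ∀ i j : Fin 2, ∀ n < k, M i j n = 0

lemma mul_entry (M N : Matrix (Fin 2) (Fin 2) LL) (i j : Fin 2) :
    (M * N) i j = M i 0 * N 0 j + M i 1 * N 1 j := by
  rw [Matrix.mul_apply, Fin.sum_univ_two]

lemma OrdGE.mul {k l : ℤ} {M N : Matrix (Fin 2) (Fin 2) LL}
    (hM : OrdGE k M) (hN : OrdGE l N) : OrdGE (k + l) (M * N) := by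
  intro i j n hn
  rw [mul_entry, AddMonoidAlgebra.coeff_add, Finsupp.add_apply,
    coeff_mul_lt (hM i 0) (hN 0 j) hn, coeff_mul_lt (hM i 1) (hN 1 j) hn, add_zero]

lemma mapSL_entry (A : SL(2, R[X])) (i j : Fin 2) :
    ((SpecialLinearGroup.map Polynomial.toLaurent A : SL(2, LL)) :
      Matrix (Fin 2) (Fin 2) LL) i j = Polynomial.toLaurent (A.1 i j) := by
  rfl

lemma ordGE_mapSL (A : SL(2, R[X])) :
    OrdGE 0 ((SpecialLinearGroup.map Polynomial.toLaurent A : SL(2, LL)) :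
      Matrix (Fin 2) (Fin 2) LL) := by
  intro i j n hn
  rw [mapSL_entry]
  exact toLaurent_coeff_neg _ hn

lemma i₂_entries (A : SL(2, R[X])) :
    ((i₂SL R A : SL(2, LL)) : Matrix (Fin 2) (Fin 2) LL) =
      !![Polynomial.toLaurent (A.1 0 0),
          LaurentPolynomial.T (-1) * Polynomial.toLaurent (A.1 0 1);
         LaurentPolynomial.T 1 * Polynomial.toLaurent (A.1 1 0),
          Polynomial.toLaurent (A.1 1 1)] := by
  show (DT R : Matrix (Fin 2) (Fin 2) LL) * (A.1.map Polynomial.toLaurent) * ((DT R)⁻¹).val = _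
  have hD : (DT R : Matrix (Fin 2) (Fin 2) LL)
      = Matrix.diagonal ![1, LaurentPolynomial.T 1] := rfl
  have hD' : ((DT R)⁻¹ : (Matrix (Fin 2) (Fin 2) LL)ˣ).val
      = Matrix.diagonal ![1, LaurentPolynomial.T (-1)] := rfl
  rw [hD, hD', ← Matrix.ext_iff]
  intro i j
  rw [Matrix.mul_diagonal, Matrix.diagonal_mul, Matrix.map_apply]
  fin_cases i <;> fin_cases j <;>
    simp only [Fin.zero_eta, Fin.mk_one, Fin.isValue, Matrix.cons_val', Matrix.cons_val_zero,
      Matrix.cons_val_one, Matrix.head_cons, Matrix.empty_val', Matrix.cons_val_fin_one,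
      Matrix.head_fin_const, Matrix.of_apply]
  · rw [one_mul, mul_one]
  · rw [one_mul, mul_comm]
  · rw [mul_one]
  · rw [mul_comm (LaurentPolynomial.T 1), LaurentPolynomial.mul_T_assoc]
    simp

section Domain
variable [IsDomain R]

lemma claimA {A : SL(2, R[X])} (hA : (A.1 1 0).coeff 0 ≠ 0)
    {M : Matrix (Fin 2) (Fin 2) LL} {k : ℤ}
    (h1 : OrdGE k M) (h2 : M 0 0 k ≠ 0 ∨ M 0 1 k ≠ 0) (h3 : ∀ j, ∀ n < k + 1, M 1 j n = 0) :
    OrdGE k (((SpecialLinearGroup.map Polynomial.toLaurent A : SL(2, LL)) :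
        Matrix (Fin 2) (Fin 2) LL) * M) ∧
      ((((SpecialLinearGroup.map Polynomial.toLaurent A : SL(2, LL)) :
        Matrix (Fin 2) (Fin 2) LL) * M) 1 0 k ≠ 0 ∨
       (((SpecialLinearGroup.map Polynomial.toLaurent A : SL(2, LL)) :
        Matrix (Fin 2) (Fin 2) LL) * M) 1 1 k ≠ 0) := by
  set G := ((SpecialLinearGroup.map Polynomial.toLaurent A : SL(2, LL)) :
    Matrix (Fin 2) (Fin 2) LL) with hG
  have hG0 : OrdGE 0 G := ordGE_mapSL A
  constructor
  · have := hG0.mul h1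
    rwa [zero_add] at this
  · have key : ∀ j : Fin 2, (G * M) 1 j k = (A.1 1 0).coeff 0 * M 0 j k := by
      intro j
      rw [mul_entry, AddMonoidAlgebra.coeff_add, Finsupp.add_apply]
      have e1 : (G 1 0 * M 0 j) k = (A.1 1 0).coeff 0 * M 0 j k := by
        have := coeff_mul_min (f := G 1 0) (g := M 0 j)
          (k := 0) (l := k) (fun n hn => by rw [hG, mapSL_entry]; exact toLaurent_coeff_neg _ hn)
          (h1 0 j)
        rw [zero_add] at this
        rw [this, hG, mapSL_entry, toLaurent_coeff_zero]
      have e2 : (G 1 1 * M 1 j) k = 0 :=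
        coeff_mul_lt (f := G 1 1) (g := M 1 j) (k := 0) (l := k + 1)
          (fun n hn => by rw [hG, mapSL_entry]; exact toLaurent_coeff_neg _ hn)
          (h3 j) (by omega)
      rw [e1, e2, add_zero]
    rcases h2 with h | h
    · exact Or.inl (by rw [key 0]; exact mul_ne_zero hA h)
    · exact Or.inr (by rw [key 1]; exact mul_ne_zero hA h)

lemma claimB {A : SL(2, R[X])} (hA : (A.1 0 1).coeff 0 ≠ 0)
    {M : Matrix (Fin 2) (Fin 2) LL} {k : ℤ}
    (h1 : OrdGE k M) (h2 : M 1 0 k ≠ 0 ∨ M 1 1 k ≠ 0) :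
    OrdGE (k - 1) (((i₂SL R A : SL(2, LL)) : Matrix (Fin 2) (Fin 2) LL) * M) ∧
      ((((i₂SL R A : SL(2, LL)) : Matrix (Fin 2) (Fin 2) LL) * M) 0 0 (k - 1) ≠ 0 ∨
       (((i₂SL R A : SL(2, LL)) : Matrix (Fin 2) (Fin 2) LL) * M) 0 1 (k - 1) ≠ 0) ∧
      (∀ j, ∀ n < k, (((i₂SL R A : SL(2, LL)) : Matrix (Fin 2) (Fin 2) LL) * M) 1 j n = 0) := by
  set H := ((i₂SL R A : SL(2, LL)) : Matrix (Fin 2) (Fin 2) LL) with hH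
  have e00 : H 0 0 = Polynomial.toLaurent (A.1 0 0) := by rw [hH, i₂_entries]; rfl
  have e01 : H 0 1 = LaurentPolynomial.T (-1) * Polynomial.toLaurent (A.1 0 1) := by
    rw [hH, i₂_entries]; rfl
  have e10 : H 1 0 = LaurentPolynomial.T 1 * Polynomial.toLaurent (A.1 1 0) := by
    rw [hH, i₂_entries]; rfl
  have e11 : H 1 1 = Polynomial.toLaurent (A.1 1 1) := by rw [hH, i₂_entries]; rfl
  have b00 : ∀ n < (0 : ℤ), H 0 0 n = 0 := fun n hn => by
    rw [e00]; exact toLaurent_coeff_neg _ hn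
  have b11 : ∀ n < (0 : ℤ), H 1 1 n = 0 := fun n hn => by
    rw [e11]; exact toLaurent_coeff_neg _ hn
  have b01 : ∀ n < (-1 : ℤ), H 0 1 n = 0 := fun n hn => by
    rw [e01, T_mul_coeff]; exact toLaurent_coeff_neg _ (by omega)
  have b10 : ∀ n < (1 : ℤ), H 1 0 n = 0 := fun n hn => by
    rw [e10, T_mul_coeff]; exact toLaurent_coeff_neg _ (by omega)
  refine ⟨?_, ?_, ?_⟩
  · intro i j n hn
    fin_cases i <;> simp only [Fin.zero_eta, Fin.mk_one, Fin.isValue] <;>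
      rw [mul_entry, AddMonoidAlgebra.coeff_add, Finsupp.add_apply]
    · rw [coeff_mul_lt b00 (h1 0 j) (by omega), coeff_mul_lt b01 (h1 1 j) (by omega), add_zero]
    · rw [coeff_mul_lt b10 (h1 0 j) (by omega), coeff_mul_lt b11 (h1 1 j) (by omega), add_zero]
  · have key : ∀ j : Fin 2, (H * M) 0 j (k - 1) = (A.1 0 1).coeff 0 * M 1 j k := by
      intro j
      rw [mul_entry, AddMonoidAlgebra.coeff_add, Finsupp.add_apply]
      have e1 : (H 0 0 * M 0 j) (k - 1) = 0 :=
        coeff_mul_lt b00 (h1 0 j) (by omega)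
      have e2 : (H 0 1 * M 1 j) (k - 1) = (A.1 0 1).coeff 0 * M 1 j k := by
        have := coeff_mul_min (f := H 0 1) (g := M 1 j) (k := -1) (l := k) b01 (h1 1 j)
        rw [show (-1 : ℤ) + k = k - 1 by ring] at this
        rw [this, e01, T_mul_coeff, show (-1 : ℤ) - (-1) = 0 by ring, toLaurent_coeff_zero]
      rw [e1, e2, zero_add]
    rcases h2 with h | h
    · exact Or.inl (by rw [key 0]; exact mul_ne_zero hA h)
    · exact Or.inr (by rw [key 1]; exact mul_ne_zero hA h)
  · intro j n hn
    rw [mul_entry, AddMonoidAlgebra.coeff_add, Finsupp.add_apply,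
      coeff_mul_lt b10 (h1 0 j) (by omega), coeff_mul_lt b11 (h1 1 j) (by omega), add_zero]

lemma mapSL_injective : Function.Injective
    (fun A : SL(2, R[X]) => (SpecialLinearGroup.map Polynomial.toLaurent A : SL(2, LL))) := by
  intro a b h
  apply Subtype.ext
  apply Matrix.ext
  intro i j
  have := congrArg (fun X : SL(2, LL) => (X : Matrix (Fin 2) (Fin 2) LL) i j) h
  simp only [mapSL_entry] at this
  exact Polynomial.toLaurent_injective this

lemma conjP_injective : Function.Injective (conjP R) := by
  intro a b h
  have h2 : i₂SL R (conjP R a) = i₂SL R (conjP R b) := by rw [h]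
  rw [i₂SL_conjP, i₂SL_conjP] at h2
  exact Subtype.ext (mapSL_injective h2)

lemma edges_injective : ∀ i, Function.Injective (edgesP R i) := by
  intro i
  cases i
  · exact conjP_injective
  · exact Subgroup.subtype_injective _

lemma not_range_true {g : SL(2, R[X])} (h : g ∉ (edgesP R true).range) :
    (g.1 1 0).coeff 0 ≠ 0 := by
  intro h0
  apply h
  have : g ∈ Psub R := by
    show (X : R[X]) ∣ g.1 1 0
    exact Polynomial.X_dvd_iff.mpr h0
  exact ⟨⟨g, this⟩, rfl⟩

lemma not_range_false {g : SL(2, R[X])} (h : g ∉ (edgesP R false).range) :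
    (g.1 0 1).coeff 0 ≠ 0 := by
  intro h0
  apply h
  obtain ⟨b', hb'⟩ : (X : R[X]) ∣ g.1 0 1 := Polynomial.X_dvd_iff.mpr h0
  have hdet : g.1 0 0 * g.1 1 1 - g.1 0 1 * g.1 1 0 = 1 := by
    have := g.2
    rwa [Matrix.det_fin_two] at this
  have hdet2 : (!![g.1 0 0, b'; X * g.1 1 0, g.1 1 1] : Matrix (Fin 2) (Fin 2) R[X]).det = 1 := by
    rw [Matrix.det_fin_two_of]
    rw [hb'] at hdet
    linear_combination hdet
  set B : SL(2, R[X]) := ⟨!![g.1 0 0, b'; X * g.1 1 0, g.1 1 1], hdet2⟩ with hB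
  have hmem : B ∈ Psub R := by
    show (X : R[X]) ∣ B.1 1 0
    have e : B.1 1 0 = X * g.1 1 0 := by
      show (!![g.1 0 0, b'; X * g.1 1 0, g.1 1 1] : Matrix (Fin 2) (Fin 2) R[X]) 1 0
        = X * g.1 1 0
      simp
    rw [e]
    exact dvd_mul_right _ _
  refine ⟨⟨B, hmem⟩, ?_⟩
  show edgesP R false _ = g
  show conjP R ⟨B, hmem⟩ = g
  apply Subtype.ext
  show conjMat R B = g.1
  rw [conjMat]
  have e00 : B.1 0 0 = g.1 0 0 := by
    show (!![g.1 0 0, b'; X * g.1 1 0, g.1 1 1] : Matrix (Fin 2) (Fin 2) R[X]) 0 0 = _; simp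
  have e01 : B.1 0 1 = b' := by
    show (!![g.1 0 0, b'; X * g.1 1 0, g.1 1 1] : Matrix (Fin 2) (Fin 2) R[X]) 0 1 = _; simp
  have e10 : B.1 1 0 = X * g.1 1 0 := by
    show (!![g.1 0 0, b'; X * g.1 1 0, g.1 1 1] : Matrix (Fin 2) (Fin 2) R[X]) 1 0 = _; simp
  have e11 : B.1 1 1 = g.1 1 1 := by
    show (!![g.1 0 0, b'; X * g.1 1 0, g.1 1 1] : Matrix (Fin 2) (Fin 2) R[X]) 1 1 = _; simp
  rw [e00, e01, e10, e11, divX_X_mul, ← hb']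
  exact (Matrix.eta_fin_two g.1).symm

/-- The product in `SL(2, R[t,t⁻¹])` of the images of the letters of a word. -/
noncomputable def Wmat (l : List ((i : Bool) × SL(2, R[X]))) : SL(2, LL) :=
  (l.map fun q => legsP R q.1 q.2).prod

lemma Wmat_nil : Wmat ([] : List ((i : Bool) × SL(2, R[X]))) = 1 := rfl

lemma Wmat_cons (p : (i : Bool) × SL(2, R[X])) (l : List ((i : Bool) × SL(2, R[X]))) :
    Wmat (p :: l) = legsP R p.1 p.2 * Wmat l := by
  rw [Wmat, List.map_cons, List.prod_cons, Wmat]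

lemma legs_true (g : SL(2, R[X])) :
    legsP R true g = SpecialLinearGroup.map Polynomial.toLaurent g := rfl

lemma legs_false (g : SL(2, R[X])) : legsP R false g = i₂SL R g := rfl

lemma ordGE_one : OrdGE 0 ((1 : SL(2, LL)) : Matrix (Fin 2) (Fin 2) LL) := by
  intro i j n hn
  rw [Matrix.SpecialLinearGroup.coe_one]
  rcases eq_or_ne i j with rfl | hne
  · rw [Matrix.one_apply_eq]
    have h1 : (1 : LL).coeff = Finsupp.single 0 1 := rfl
    rw [h1, Finsupp.single_apply, if_neg (by omega)]
  · rw [Matrix.one_apply_ne hne]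
    rfl

lemma one_attain : ((1 : SL(2, LL)) : Matrix (Fin 2) (Fin 2) LL) 1 1 (0 : ℤ) ≠ 0 := by
  rw [Matrix.SpecialLinearGroup.coe_one, Matrix.one_apply_eq]
  have h1 : (1 : LL).coeff = Finsupp.single 0 1 := rfl
  rw [h1, Finsupp.single_eq_same]
  exact one_ne_zero

lemma ping : ∀ (t : List ((i : Bool) × SL(2, R[X]))) (p : (i : Bool) × SL(2, R[X])),
    (p :: t).Chain' (fun a b => a.1 ≠ b.1) →
    (∀ q ∈ p :: t, q.2 ∉ (edgesP R q.1).range) →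
    (p.1 = true → ∃ k : ℤ, k ≤ 0 ∧ (k ≤ -1 ∨ t = []) ∧
        OrdGE k ((Wmat (p :: t) : SL(2, LL)) : Matrix (Fin 2) (Fin 2) LL) ∧
        (((Wmat (p :: t) : SL(2, LL)) : Matrix (Fin 2) (Fin 2) LL) 1 0 k ≠ 0 ∨
         ((Wmat (p :: t) : SL(2, LL)) : Matrix (Fin 2) (Fin 2) LL) 1 1 k ≠ 0)) ∧
    (p.1 = false → ∃ k : ℤ, k ≤ -1 ∧
        OrdGE k ((Wmat (p :: t) : SL(2, LL)) : Matrix (Fin 2) (Fin 2) LL) ∧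
        (((Wmat (p :: t) : SL(2, LL)) : Matrix (Fin 2) (Fin 2) LL) 0 0 k ≠ 0 ∨
         ((Wmat (p :: t) : SL(2, LL)) : Matrix (Fin 2) (Fin 2) LL) 0 1 k ≠ 0) ∧
        (∀ j, ∀ n < k + 1,
          ((Wmat (p :: t) : SL(2, LL)) : Matrix (Fin 2) (Fin 2) LL) 1 j n = 0)) := by
  intro t
  induction t with
  | nil =>
    intro p _ hlet
    have hp := hlet p (List.mem_cons_self)
    rcases p with ⟨b, g⟩
    cases b
    · -- false
      refine ⟨fun h => by simp at h, fun _ => ?_⟩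
      have hq : (g.1 0 1).coeff 0 ≠ 0 := not_range_false hp
      have hW : Wmat [⟨false, g⟩] = i₂SL R g := by
        rw [Wmat_cons, Wmat_nil, mul_one, legs_false]
      obtain ⟨h1, h2, h3⟩ := claimB (R := R) hq (ordGE_one (R := R)) (Or.inr one_attain)
      rw [Matrix.SpecialLinearGroup.coe_one, mul_one] at h1 h2 h3
      refine ⟨-1, le_refl _, ?_, ?_, ?_⟩
      · rw [hW]; simpa using h1
      · rw [hW]; simpa using h2
      · rw [hW]
        intro j n hn
        exact h3 j n (by omega)
    · -- true
      refine ⟨fun _ => ?_, fun h => by simp at h⟩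
      have hq : (g.1 1 0).coeff 0 ≠ 0 := not_range_true hp
      have hW : Wmat [⟨true, g⟩] = SpecialLinearGroup.map Polynomial.toLaurent g := by
        rw [Wmat_cons, Wmat_nil, mul_one, legs_true]
      refine ⟨0, le_refl _, Or.inr rfl, ?_, ?_⟩
      · rw [hW]; exact ordGE_mapSL g
      · rw [hW]
        left
        rw [mapSL_entry, toLaurent_coeff_zero]
        exact hq
  | cons q t' ih =>
    intro p hch hlet
    have hch' := List.isChain_cons_cons.mp hch
    have hne : p.1 ≠ q.1 := hch'.1
    have ihq := ih q hch'.2 (fun r hr => hlet r (List.mem_cons_of_mem _ hr))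
    have hp := hlet p (List.mem_cons_self)
    rcases p with ⟨b, g⟩
    cases b
    · -- p false, q true
      refine ⟨fun h => by simp at h, fun _ => ?_⟩
      have hqt : q.1 = true := by
        cases hq1 : q.1
        · exact absurd hq1.symm hne
        · rfl
      obtain ⟨k, hk0, _, hord, hbot⟩ := ihq.1 hqt
      have hA : (g.1 0 1).coeff 0 ≠ 0 := not_range_false hp
      obtain ⟨h1, h2, h3⟩ := claimB (R := R) hA hord hbot
      have hWc : ((Wmat (⟨false, g⟩ :: q :: t') : SL(2, LL)) : Matrix (Fin 2) (Fin 2) LL)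
          = ((i₂SL R g : SL(2, LL)) : Matrix (Fin 2) (Fin 2) LL) *
            ((Wmat (q :: t') : SL(2, LL)) : Matrix (Fin 2) (Fin 2) LL) := by
        rw [Wmat_cons, legs_false, Matrix.SpecialLinearGroup.coe_mul]
      refine ⟨k - 1, by omega, ?_, ?_, ?_⟩
      · rw [hWc]; exact h1
      · rw [hWc]; exact h2
      · rw [hWc]
        intro j n hn
        exact h3 j n (by omega)
    · -- p true, q false
      refine ⟨fun _ => ?_, fun h => by simp at h⟩
      have hqt : q.1 = false := by
        cases hq1 : q.1
        · rfl
        · exact absurd hq1.symm hne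
      obtain ⟨k, hk0, hord, htop, hbot⟩ := ihq.2 hqt
      have hA : (g.1 1 0).coeff 0 ≠ 0 := not_range_true hp
      obtain ⟨h1, h2⟩ := claimA (R := R) hA hord htop hbot
      have hWc : ((Wmat (⟨true, g⟩ :: q :: t') : SL(2, LL)) : Matrix (Fin 2) (Fin 2) LL)
          = ((SpecialLinearGroup.map Polynomial.toLaurent g : SL(2, LL)) :
              Matrix (Fin 2) (Fin 2) LL) *
            ((Wmat (q :: t') : SL(2, LL)) : Matrix (Fin 2) (Fin 2) LL) := by
        rw [Wmat_cons, legs_true, Matrix.SpecialLinearGroup.coe_mul]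
      refine ⟨k, by omega, Or.inl (by omega), ?_, ?_⟩
      · rw [hWc]; exact h1
      · rw [hWc]; exact h2

lemma letter_not_range (dd : Monoid.PushoutI.NormalWord.Transversal (edgesP R)) {i : Bool}
    {g : SL(2, R[X])} (hg : g ∈ dd.set i) (h1 : g ≠ 1) : g ∉ (edgesP R i).range := by
  rintro ⟨h, rfl⟩
  have hu := (dd.compl i).existsUnique (edgesP R i h)
  have e1 : (⟨⟨edgesP R i h, ⟨h, rfl⟩⟩, ⟨1, dd.one_mem i⟩⟩ :
        ((edgesP R i).range : Set (SL(2, R[X]))) × (dd.set i))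
      = ⟨⟨1, Subgroup.one_mem _⟩, ⟨edgesP R i h, hg⟩⟩ :=
    hu.unique (mul_one _) (one_mul _)
  have := congrArg (fun p : ((edgesP R i).range : Set (SL(2, R[X]))) × (dd.set i) =>
    (p.2 : SL(2, R[X]))) e1
  exact h1 this.symm

lemma amalg_injective : Function.Injective (amalgamToSL R) := by
  classical
  obtain ⟨dd⟩ := Monoid.PushoutI.NormalWord.transversal_nonempty (edgesP R) edges_injective
  rw [injective_iff_map_eq_one]
  intro x hx
  set w : Monoid.PushoutI.NormalWord dd := Monoid.PushoutI.NormalWord.equiv x with hwdef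
  have hprod : w.prod = x := by
    have := (Monoid.PushoutI.NormalWord.equiv (d := dd)).symm_apply_apply x
    exact this
  have hx2 : amalgamToSL R w.prod = 1 := by rw [hprod]; exact hx
  rw [Monoid.PushoutI.NormalWord.prod, _root_.map_mul] at hx2
  have hbase : amalgamToSL R (Monoid.PushoutI.base (edgesP R) w.head)
      = SpecialLinearGroup.map Polynomial.toLaurent ((w.head : SL(2, R[X]))) := by
    rw [amalgamToSL, Monoid.PushoutI.lift_base]
    rfl
  have hword : amalgamToSL R (Monoid.PushoutI.ofCoprodI w.toWord.prod)
      = Wmat w.toList := by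
    have h1 : amalgamToSL R (Monoid.PushoutI.ofCoprodI w.toWord.prod)
        = ((amalgamToSL R).comp Monoid.PushoutI.ofCoprodI)
            (List.prod (w.toList.map fun l => Monoid.CoprodI.of l.2)) := rfl
    rw [h1, map_list_prod, List.map_map, Wmat]
    congr 1
  rw [hbase, hword] at hx2
  have hWeq : (Wmat w.toList : SL(2, LL))
      = SpecialLinearGroup.map Polynomial.toLaurent (((w.head)⁻¹ : ↥(Psub R)) : SL(2, R[X])) := by
    have h3 : (Wmat w.toList : SL(2, LL))
        = (SpecialLinearGroup.map Polynomial.toLaurent ((w.head : SL(2, R[X]))))⁻¹ :=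
      (inv_eq_of_mul_eq_one_right hx2).symm
    rw [h3, ← map_inv]
    rfl
  rcases hlist : w.toList with _ | ⟨p, t⟩
  · -- empty word
    have hW1 : Wmat w.toList = 1 := by rw [hlist, Wmat_nil]
    rw [hW1] at hWeq
    have hhead : ((w.head)⁻¹ : ↥(Psub R)) = 1 := by
      apply Subtype.ext
      have h5 : ((1 : SL(2, R[X])) : SL(2, R[X]))
          = (((w.head)⁻¹ : ↥(Psub R)) : SL(2, R[X])) := by
        apply mapSL_injective
        show SpecialLinearGroup.map Polynomial.toLaurent (1 : SL(2, R[X])) = _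
        rw [_root_.map_one]
        exact hWeq
      rw [← h5]
      rfl
    have hhead1 : w.head = 1 := by
      have := congrArg (·⁻¹) hhead
      simpa using this
    rw [← hprod, Monoid.PushoutI.NormalWord.prod, hhead1, _root_.map_one, one_mul]
    have : w.toWord.prod = 1 := by
      rw [Monoid.CoprodI.Word.prod, hlist]
      rfl
    rw [this, _root_.map_one]
  · -- nonempty word
    exfalso
    have hch : (p :: t).Chain' (fun a b => a.1 ≠ b.1) := by
      have := w.toWord.chain_ne
      rwa [hlist] at this
    have hlet : ∀ q ∈ p :: t, q.2 ∉ (edgesP R q.1).range := by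
      intro q hq
      have hmem : q.2 ∈ dd.set q.1 := by
        apply w.normalized q.1 q.2
        rw [hlist]
        simpa using hq
      have hne1 : q.2 ≠ 1 := by
        apply w.toWord.ne_one
        rw [hlist]
        simpa using hq
      exact letter_not_range dd hmem hne1
    have hping := ping t p hch hlet
    have hOrd0 : OrdGE 0 ((Wmat (p :: t) : SL(2, LL)) : Matrix (Fin 2) (Fin 2) LL) := by
      rw [← hlist, hWeq]
      exact ordGE_mapSL _
    rcases hb : p.1 with _ | _
    · -- p.1 = false
      obtain ⟨k, hk, _, htop, _⟩ := hping.2 hb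
      rcases htop with h | h
      · exact h (hOrd0 0 0 k (by omega))
      · exact h (hOrd0 0 1 k (by omega))
    · -- p.1 = true
      obtain ⟨k, hk0, hk1, _, hbot⟩ := hping.1 hb
      rcases hk1 with hk1 | rfl
      · rcases hbot with h | h
        · exact h (hOrd0 1 0 k (by omega))
        · exact h (hOrd0 1 1 k (by omega))
      · -- singleton
        have hWp : Wmat [p] = legsP R p.1 p.2 := by
          rw [Wmat_cons, Wmat_nil, mul_one]
        rw [← hlist] at hWp
        rw [hWp, hb, legs_true] at hWeq
        have h6 := mapSL_injective hWeq
        apply hlet p (List.mem_cons_self)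
        rw [hb]
        refine ⟨(w.head)⁻¹, ?_⟩
        show (((w.head)⁻¹ : ↥(Psub R)) : SL(2, R[X])) = p.2
        exact h6.symm

section PID
variable [IsPrincipalIdealRing R]

lemma kernel_lemma {a b c d : R} (hdet : a * d = b * c)
    (hne : ¬(a = 0 ∧ b = 0 ∧ c = 0 ∧ d = 0)) :
    ∃ x y u v : R, x * v - y * u = 1 ∧ x * a + y * c = 0 ∧ x * b + y * d = 0 := by
  obtain ⟨lam, mu, hlm, h1, h2⟩ :
      ∃ lam mu : R, ¬(lam = 0 ∧ mu = 0) ∧ lam * a + mu * c = 0 ∧ lam * b + mu * d = 0 := by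
    by_cases hac : a = 0 ∧ c = 0
    · refine ⟨d, -b, ?_, by rw [hac.1, hac.2]; ring, by ring⟩
      rintro ⟨rfl, hb⟩
      exact hne ⟨hac.1, neg_eq_zero.mp hb, hac.2, rfl⟩
    · refine ⟨c, -a, ?_, by ring, by linear_combination -hdet⟩
      rintro ⟨rfl, ha⟩
      exact hac ⟨neg_eq_zero.mp ha, rfl⟩
  obtain ⟨g0, hg0⟩ := (IsPrincipalIdealRing.principal (Ideal.span ({lam, mu} : Set R))).principal
  have hg0' : Ideal.span ({lam, mu} : Set R) = Ideal.span {g0} := hg0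
  have hlamm : g0 ∣ lam := by
    have : lam ∈ Ideal.span ({lam, mu} : Set R) := Ideal.subset_span (Set.mem_insert _ _)
    rw [hg0'] at this
    exact Ideal.mem_span_singleton.mp this
  have hmum : g0 ∣ mu := by
    have : mu ∈ Ideal.span ({lam, mu} : Set R) :=
      Ideal.subset_span (Set.mem_insert_of_mem _ rfl)
    rw [hg0'] at this
    exact Ideal.mem_span_singleton.mp this
  obtain ⟨lam', rfl⟩ := hlamm
  obtain ⟨mu', rfl⟩ := hmum
  have hg0ne : g0 ≠ 0 := by
    rintro rfl
    exact hlm ⟨zero_mul _, zero_mul _⟩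
  have hg0mem : g0 ∈ Ideal.span ({g0 * lam', g0 * mu'} : Set R) := by
    rw [hg0']
    exact Ideal.mem_span_singleton_self g0
  obtain ⟨m, n, hmn⟩ := Ideal.mem_span_pair.mp hg0mem
  have hcomb : m * lam' + n * mu' = 1 := by
    apply mul_left_cancel₀ hg0ne
    rw [mul_one]
    linear_combination hmn
  have hk1 : lam' * a + mu' * c = 0 := by
    apply mul_left_cancel₀ hg0ne
    rw [mul_zero]
    linear_combination h1
  have hk2 : lam' * b + mu' * d = 0 := by
    apply mul_left_cancel₀ hg0ne
    rw [mul_zero]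
    linear_combination h2
  exact ⟨lam', mu', -n, m, by linear_combination hcomb, hk1, hk2⟩

lemma exists_poly {f : LL} (hf : ∀ n < (0 : ℤ), f n = 0) :
    ∃ p : R[X], Polynomial.toLaurent p = f := by
  refine ⟨Polynomial.ofFinsupp (AddMonoidAlgebra.ofCoeff (Finsupp.comapDomain ((↑) : ℕ → ℤ) f.coeff
    (Set.injOn_of_injective Nat.cast_injective))), ?_⟩
  rw [Polynomial.toLaurent_apply]
  apply AddMonoidAlgebra.coeff_injective
  show Finsupp.mapDomain _ (Finsupp.comapDomain _ f.coeff _) = f.coeff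
  apply Finsupp.mapDomain_comapDomain _ Nat.cast_injective
  intro n hn
  rcases lt_or_ge n 0 with h | h
  · exact absurd (hf n h) (Finsupp.mem_support_iff.mp hn)
  · exact ⟨n.toNat, Int.toNat_of_nonneg h⟩

lemma exists_SL_preimage (M : SL(2, LL)) (h : OrdGE 0 (M : Matrix (Fin 2) (Fin 2) LL)) :
    ∃ B : SL(2, R[X]), SpecialLinearGroup.map Polynomial.toLaurent B = M := by
  choose p hp using fun i j =>
    exists_poly (f := (M : Matrix (Fin 2) (Fin 2) LL) i j) (fun n hn => h i j n hn)
  have hmap : (Matrix.of p).map Polynomial.toLaurent = (M : Matrix (Fin 2) (Fin 2) LL) := by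
    apply Matrix.ext
    intro i j
    rw [Matrix.map_apply]
    exact hp i j
  have hdet : (Matrix.of p).det = 1 := by
    apply Polynomial.toLaurent_injective
    rw [RingHom.map_det, RingHom.mapMatrix_apply, hmap, _root_.map_one]
    exact M.2
  refine ⟨⟨Matrix.of p, hdet⟩, ?_⟩
  apply Subtype.ext
  show (Matrix.of p).map Polynomial.toLaurent = _
  exact hmap

lemma coeff_one_ne (m : ℤ) (hm : m ≠ 0) : (1 : LL) m = 0 := by
  have e : (1 : LL).coeff = Finsupp.single 0 1 := rfl
  rw [e, Finsupp.single_apply, if_neg (by omega)]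

lemma detA_zero (M : SL(2, LL)) {k : ℤ} (hk : k < 0) (h : OrdGE k M.1) :
    M.1 0 0 k * M.1 1 1 k - M.1 0 1 k * M.1 1 0 k = 0 := by
  have hdet : M.1 0 0 * M.1 1 1 - M.1 0 1 * M.1 1 0 = 1 := by
    have := M.2
    rwa [Matrix.det_fin_two] at this
  have hc := congrArg (fun f : LL => f (k + k)) hdet
  beta_reduce at hc
  rw [AddMonoidAlgebra.coeff_sub, Finsupp.sub_apply, coeff_mul_min (h 0 0) (h 1 1), coeff_mul_min (h 0 1) (h 1 0),
    coeff_one_ne _ (by omega)] at hc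
  exact hc

lemma detB_zero (M : SL(2, LL)) {k : ℤ} (h : OrdGE k M.1)
    (hbot : ∀ j, ∀ n < k + 1, M.1 1 j n = 0) :
    M.1 0 0 k * M.1 1 1 (k + 1) - M.1 0 1 k * M.1 1 0 (k + 1) = 0 := by
  have hdet : M.1 0 0 * M.1 1 1 - M.1 0 1 * M.1 1 0 = 1 := by
    have := M.2
    rwa [Matrix.det_fin_two] at this
  have hc := congrArg (fun f : LL => f (k + (k + 1))) hdet
  beta_reduce at hc
  rw [AddMonoidAlgebra.coeff_sub, Finsupp.sub_apply, coeff_mul_min (h 0 0) (hbot 1), coeff_mul_min (h 0 1) (hbot 0),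
    coeff_one_ne _ (by omega)] at hc
  exact hc

lemma constSL_entries (x y u v : R) (hdet : x * v - y * u = 1) :
    ∃ g : SL(2, R[X]), g.1 0 0 = Polynomial.C x ∧ g.1 0 1 = Polynomial.C y ∧
      g.1 1 0 = Polynomial.C u ∧ g.1 1 1 = Polynomial.C v := by
  have hd : (!![Polynomial.C x, Polynomial.C y; Polynomial.C u, Polynomial.C v] :
      Matrix (Fin 2) (Fin 2) R[X]).det = 1 := by
    rw [Matrix.det_fin_two_of, ← Polynomial.C_mul, ← Polynomial.C_mul, ← Polynomial.C_sub, hdet,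
      Polynomial.C_1]
  refine ⟨⟨!![Polynomial.C x, Polynomial.C y; Polynomial.C u, Polynomial.C v], hd⟩,
    ?_, ?_, ?_, ?_⟩ <;>
    · show (!![Polynomial.C x, Polynomial.C y; Polynomial.C u, Polynomial.C v] :
        Matrix (Fin 2) (Fin 2) R[X]) _ _ = _
      simp

lemma coeff_constSL (r : R) {n : ℤ} :
    (Polynomial.toLaurent (Polynomial.C r)) n = if n = 0 then r else 0 := by
  rcases eq_or_ne n 0 with rfl | hn
  · rw [if_pos rfl, toLaurent_coeff_zero, Polynomial.coeff_C_zero]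
  · rw [Polynomial.toLaurent_C]
    exact LaurentPolynomial.C_apply r n

set_option maxHeartbeats 1000000 in
lemma stepA (M : SL(2, LL)) {k : ℤ} (hk : k < 0)
    (h : OrdGE k M.1) (hbot : M.1 1 0 k ≠ 0 ∨ M.1 1 1 k ≠ 0) :
    ∃ g : SL(2, R[X]),
      OrdGE k ((SpecialLinearGroup.map Polynomial.toLaurent g * M : SL(2, LL)).1) ∧
      ((SpecialLinearGroup.map Polynomial.toLaurent g * M : SL(2, LL)).1 0 0 k ≠ 0 ∨
       (SpecialLinearGroup.map Polynomial.toLaurent g * M : SL(2, LL)).1 0 1 k ≠ 0) ∧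
      (∀ j, ∀ n < k + 1,
        (SpecialLinearGroup.map Polynomial.toLaurent g * M : SL(2, LL)).1 1 j n = 0) := by
  have hdet : M.1 0 0 k * M.1 1 1 k = M.1 0 1 k * M.1 1 0 k := by
    have := detA_zero M hk h
    linear_combination this
  obtain ⟨x, y, u, v, e1, e2, e3⟩ := kernel_lemma hdet
    (by rintro ⟨-, -, h3, h4⟩; rcases hbot with hb | hb; exacts [hb h3, hb h4])
  obtain ⟨g, g00, g01, g10, g11⟩ := constSL_entries (-u) (-v) x y (by linear_combination e1)
  refine ⟨g, ?_, ?_, ?_⟩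
  all_goals rw [Matrix.SpecialLinearGroup.coe_mul]
  · have := (ordGE_mapSL g).mul h
    rwa [zero_add] at this
  · -- top row attains k
    have key : ∀ j : Fin 2, (((SpecialLinearGroup.map Polynomial.toLaurent g : SL(2, LL)) :
        Matrix (Fin 2) (Fin 2) LL) * M.1) 0 j k
        = -u * M.1 0 j k + -v * M.1 1 j k := by
      intro j
      rw [mul_entry, AddMonoidAlgebra.coeff_add, Finsupp.add_apply]
      have p1 := coeff_mul_min (f := (SpecialLinearGroup.map Polynomial.toLaurent g :
          SL(2, LL)).1 0 0) (g := M.1 0 j) (k := 0) (l := k)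
        (fun n hn => by rw [mapSL_entry]; exact toLaurent_coeff_neg _ hn) (h 0 j)
      rw [zero_add] at p1
      have p2 := coeff_mul_min (f := (SpecialLinearGroup.map Polynomial.toLaurent g :
          SL(2, LL)).1 0 1) (g := M.1 1 j) (k := 0) (l := k)
        (fun n hn => by rw [mapSL_entry]; exact toLaurent_coeff_neg _ hn) (h 1 j)
      rw [zero_add] at p2
      rw [p1, p2, mapSL_entry, mapSL_entry, g00, g01, coeff_constSL, coeff_constSL,
        if_pos rfl, if_pos rfl]
    by_contra hcon
    push_neg at hcon
    obtain ⟨hc1, hc2⟩ := hcon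
    rw [key 0] at hc1
    rw [key 1] at hc2
    have e4 : u * M.1 0 0 k + v * M.1 1 0 k = 0 := by linear_combination -hc1
    have e5 : u * M.1 0 1 k + v * M.1 1 1 k = 0 := by linear_combination -hc2
    have hγ0 : M.1 1 0 k = 0 := by linear_combination x * e4 - u * e2 - (M.1 1 0 k) * e1
    have hδ0 : M.1 1 1 k = 0 := by linear_combination x * e5 - u * e3 - (M.1 1 1 k) * e1
    rcases hbot with hb | hb
    exacts [hb hγ0, hb hδ0]
  · -- bottom row vanishes to order k+1
    intro j n hn
    rw [mul_entry, AddMonoidAlgebra.coeff_add, Finsupp.add_apply]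
    have b0 : ∀ m < (0 : ℤ), (SpecialLinearGroup.map Polynomial.toLaurent g :
        SL(2, LL)).1 1 0 m = 0 := fun m hm => by
      rw [mapSL_entry]; exact toLaurent_coeff_neg _ hm
    have b1 : ∀ m < (0 : ℤ), (SpecialLinearGroup.map Polynomial.toLaurent g :
        SL(2, LL)).1 1 1 m = 0 := fun m hm => by
      rw [mapSL_entry]; exact toLaurent_coeff_neg _ hm
    rcases lt_or_eq_of_le (show n ≤ k by omega) with hlt | rfl
    · rw [coeff_mul_lt b0 (h 0 j) (by omega), coeff_mul_lt b1 (h 1 j) (by omega), add_zero]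
    · have p1 := coeff_mul_min (f := (SpecialLinearGroup.map Polynomial.toLaurent g :
          SL(2, LL)).1 1 0) (g := M.1 0 j) (k := 0) (l := n) b0 (h 0 j)
      rw [zero_add] at p1
      have p2 := coeff_mul_min (f := (SpecialLinearGroup.map Polynomial.toLaurent g :
          SL(2, LL)).1 1 1) (g := M.1 1 j) (k := 0) (l := n) b1 (h 1 j)
      rw [zero_add] at p2
      rw [p1, p2, mapSL_entry, mapSL_entry, g10, g11, coeff_constSL, coeff_constSL,
        if_pos rfl, if_pos rfl]
      fin_cases j
      · exact e2
      · exact e3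

set_option maxHeartbeats 1000000 in
lemma stepB (M : SL(2, LL)) {k : ℤ}
    (h : OrdGE k M.1) (htop : M.1 0 0 k ≠ 0 ∨ M.1 0 1 k ≠ 0)
    (hbot : ∀ j, ∀ n < k + 1, M.1 1 j n = 0) :
    ∃ g : SL(2, R[X]), OrdGE (k + 1) ((i₂SL R g * M : SL(2, LL)).1) := by
  have hdet : M.1 0 0 k * M.1 1 1 (k + 1) = M.1 0 1 k * M.1 1 0 (k + 1) := by
    have := detB_zero M h hbot
    linear_combination this
  obtain ⟨x, y, u, v, e1, e2, e3⟩ := kernel_lemma hdet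
    (by rintro ⟨h3, h4, -, -⟩; rcases htop with hb | hb; exacts [hb h3, hb h4])
  obtain ⟨g, g00, g01, g10, g11⟩ := constSL_entries x y u v e1
  refine ⟨g, ?_⟩
  rw [Matrix.SpecialLinearGroup.coe_mul]
  have h00 : ((i₂SL R g : SL(2, LL)) : Matrix (Fin 2) (Fin 2) LL) 0 0
      = Polynomial.toLaurent (Polynomial.C x) := by rw [i₂_entries, g00]; rfl
  have h01 : ((i₂SL R g : SL(2, LL)) : Matrix (Fin 2) (Fin 2) LL) 0 1
      = LaurentPolynomial.T (-1) * Polynomial.toLaurent (Polynomial.C y) := by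
    rw [i₂_entries, g01]; rfl
  have h10 : ((i₂SL R g : SL(2, LL)) : Matrix (Fin 2) (Fin 2) LL) 1 0
      = LaurentPolynomial.T 1 * Polynomial.toLaurent (Polynomial.C u) := by
    rw [i₂_entries, g10]; rfl
  have h11 : ((i₂SL R g : SL(2, LL)) : Matrix (Fin 2) (Fin 2) LL) 1 1
      = Polynomial.toLaurent (Polynomial.C v) := by rw [i₂_entries, g11]; rfl
  have b00 : ∀ m < (0 : ℤ), ((i₂SL R g : SL(2, LL)) : Matrix (Fin 2) (Fin 2) LL) 0 0 m = 0 :=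
    fun m hm => by rw [h00]; exact toLaurent_coeff_neg _ hm
  have b11 : ∀ m < (0 : ℤ), ((i₂SL R g : SL(2, LL)) : Matrix (Fin 2) (Fin 2) LL) 1 1 m = 0 :=
    fun m hm => by rw [h11]; exact toLaurent_coeff_neg _ hm
  have b01 : ∀ m < (-1 : ℤ), ((i₂SL R g : SL(2, LL)) : Matrix (Fin 2) (Fin 2) LL) 0 1 m = 0 :=
    fun m hm => by rw [h01, T_mul_coeff]; exact toLaurent_coeff_neg _ (by omega)
  have b10 : ∀ m < (1 : ℤ), ((i₂SL R g : SL(2, LL)) : Matrix (Fin 2) (Fin 2) LL) 1 0 m = 0 :=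
    fun m hm => by rw [h10, T_mul_coeff]; exact toLaurent_coeff_neg _ (by omega)
  have row0 : ∀ (j : Fin 2), ∀ n < k + 1,
      ((((i₂SL R g : SL(2, LL)) : Matrix (Fin 2) (Fin 2) LL)) * M.1) 0 j n = 0 := by
    intro j n hn
    rw [mul_entry, AddMonoidAlgebra.coeff_add, Finsupp.add_apply]
    rcases lt_or_eq_of_le (show n ≤ k by omega) with hlt | rfl
    · rw [coeff_mul_lt b00 (h 0 j) (by omega), coeff_mul_lt b01 (hbot j) (by omega), add_zero]
    · have p1 := coeff_mul_min (f := ((i₂SL R g : SL(2, LL)) : Matrix (Fin 2) (Fin 2) LL) 0 0)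
        (g := M.1 0 j) (k := 0) (l := n) b00 (h 0 j)
      rw [zero_add] at p1
      have p2 := coeff_mul_min (f := ((i₂SL R g : SL(2, LL)) : Matrix (Fin 2) (Fin 2) LL) 0 1)
        (g := M.1 1 j) (k := -1) (l := n + 1) b01 (hbot j)
      rw [show (-1 : ℤ) + (n + 1) = n by ring] at p2
      rw [p1, p2, h00, h01, T_mul_coeff, show (-1 : ℤ) - (-1) = 0 by ring, toLaurent_coeff_zero,
        toLaurent_coeff_zero, Polynomial.coeff_C_zero, Polynomial.coeff_C_zero]
      fin_cases j
      · exact e2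
      · exact e3
  have row1 : ∀ (j : Fin 2), ∀ n < k + 1,
      ((((i₂SL R g : SL(2, LL)) : Matrix (Fin 2) (Fin 2) LL)) * M.1) 1 j n = 0 := by
    intro j n hn
    rw [mul_entry, AddMonoidAlgebra.coeff_add, Finsupp.add_apply,
      coeff_mul_lt b10 (h 0 j) (by omega), coeff_mul_lt b11 (hbot j) (by omega), add_zero]
  intro i j n hn
  fin_cases i
  · exact row0 j n hn
  · exact row1 j n hn

lemma mem_range_true (g : SL(2, R[X])) :
    (SpecialLinearGroup.map Polynomial.toLaurent g : SL(2, LL)) ∈ (amalgamToSL R).range :=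
  ⟨Monoid.PushoutI.of true g, by rw [amalgamToSL, Monoid.PushoutI.lift_of]; rfl⟩

lemma mem_range_false (g : SL(2, R[X])) : i₂SL R g ∈ (amalgamToSL R).range :=
  ⟨Monoid.PushoutI.of false g, by rw [amalgamToSL, Monoid.PushoutI.lift_of]; rfl⟩

lemma descent {k : ℤ} (hk : k < 0) (M : SL(2, LL)) (h : OrdGE k M.1) :
    ∃ γ ∈ (amalgamToSL R).range, OrdGE (k + 1) ((γ * M : SL(2, LL)).1) := by
  by_cases hbot : M.1 1 0 k ≠ 0 ∨ M.1 1 1 k ≠ 0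
  · obtain ⟨g, h1, h2, h3⟩ := stepA M hk h hbot
    obtain ⟨g2, h4⟩ := stepB (SpecialLinearGroup.map Polynomial.toLaurent g * M) h1 h2 h3
    refine ⟨i₂SL R g2 * SpecialLinearGroup.map Polynomial.toLaurent g,
      mul_mem (mem_range_false g2) (mem_range_true g), ?_⟩
    rw [mul_assoc]
    exact h4
  · push_neg at hbot
    have hbot' : ∀ j, ∀ n < k + 1, M.1 1 j n = 0 := by
      intro j n hn
      rcases lt_or_eq_of_le (show n ≤ k by omega) with hlt | rfl
      · exact h 1 j n hlt
      · fin_cases j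
        · exact hbot.1
        · exact hbot.2
    by_cases htop : M.1 0 0 k ≠ 0 ∨ M.1 0 1 k ≠ 0
    · obtain ⟨g2, h4⟩ := stepB M h htop hbot'
      exact ⟨i₂SL R g2, mem_range_false g2, h4⟩
    · push_neg at htop
      refine ⟨1, one_mem _, ?_⟩
      rw [one_mul]
      intro i j n hn
      rcases lt_or_eq_of_le (show n ≤ k by omega) with hlt | rfl
      · exact h i j n hlt
      · fin_cases i <;> fin_cases j
        · exact htop.1
        · exact htop.2
        · exact hbot.1
        · exact hbot.2

lemma surj_aux : ∀ (N : ℕ) (M : SL(2, LL)),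
    OrdGE (-(N : ℤ)) M.1 → M ∈ (amalgamToSL R).range := by
  intro N
  induction N with
  | zero =>
    intro M h
    obtain ⟨B, hB⟩ := exists_SL_preimage M (by simpa using h)
    rw [← hB]
    exact mem_range_true B
  | succ n ih =>
    intro M h
    obtain ⟨γ, hγ, h2⟩ := descent (k := -((n : ℤ) + 1)) (by omega) M (by exact_mod_cast h)
    have h3 : OrdGE (-(n : ℤ)) ((γ * M : SL(2, LL))).1 := by
      have e : -((n : ℤ) + 1) + 1 = -(n : ℤ) := by ring
      rwa [e] at h2
    have hmem := ih (γ * M) h3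
    have hM : M = γ⁻¹ * (γ * M) := by group
    rw [hM]
    exact mul_mem (inv_mem hγ) hmem

lemma entry_bound (f : LL) : ∃ N : ℕ, ∀ n < -(N : ℤ), f n = 0 := by
  rcases f.coeff.support.eq_empty_or_nonempty with he | hne
  · exact ⟨0, fun n _ => Finsupp.notMem_support_iff.mp (by rw [he]; exact Finset.notMem_empty n)⟩
  · refine ⟨(f.coeff.support.min' hne).natAbs, fun n hn => ?_⟩
    by_contra h0
    have h1 := f.coeff.support.min'_le n (Finsupp.mem_support_iff.mpr h0)
    have h2 := Int.natAbs_eq (f.coeff.support.min' hne)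
    omega

lemma amalg_surjective : Function.Surjective (amalgamToSL R) := by
  intro M
  obtain ⟨N00, h00⟩ := entry_bound (M.1 0 0)
  obtain ⟨N01, h01⟩ := entry_bound (M.1 0 1)
  obtain ⟨N10, h10⟩ := entry_bound (M.1 1 0)
  obtain ⟨N11, h11⟩ := entry_bound (M.1 1 1)
  set N := max (max N00 N01) (max N10 N11) with hN
  have hb : ∀ i j : Fin 2, ∃ Nij : ℕ, (Nij ≤ N) ∧ ∀ n < -(Nij : ℤ), M.1 i j n = 0 := by
    intro i j
    fin_cases i <;> fin_cases j
    · exact ⟨N00, le_max_of_le_left (le_max_left _ _), h00⟩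
    · exact ⟨N01, le_max_of_le_left (le_max_right _ _), h01⟩
    · exact ⟨N10, le_max_of_le_right (le_max_left _ _), h10⟩
    · exact ⟨N11, le_max_of_le_right (le_max_right _ _), h11⟩
  have hOrd : OrdGE (-(N : ℤ)) M.1 := by
    intro i j n hn
    obtain ⟨Nij, hle, hz⟩ := hb i j
    apply hz
    have : (Nij : ℤ) ≤ (N : ℤ) := by exact_mod_cast hle
    omega
  exact surj_aux N M hOrd

end PID

end Domain

end Amalg

open Paper in
/-- For any principal ideal domain `R`, `SL₂(R[t,t⁻¹])` is the amalgamated free product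
`SL₂(R[t]) *_{P(R)} SL₂(R[t])`. -/
theorem amalgam_SL2_Laurent_pid (R : Type) [CommRing R] [IsDomain R]
    [IsPrincipalIdealRing R] :
    Function.Bijective (amalgamToSL R) :=
  ⟨Amalg.amalg_injective, Amalg.amalg_surjective⟩
end

section
/- Let K(𝔽₂) denote the subgroup of SL₂(𝔽₂[t]) of matrices congruent to the identity modulo t, let C denote the subgroup of matrices of the form (1, t·p(t); 0, 1) with p ∈ 𝔽₂[t], and set m(0) = (1 0; 0 1), m(1) = (1 0; 1 1), m(∞) = (0 1; 1 0). Then the natural homomorphism from the free product of the three subgroups m(0)·C·m(0)⁻¹, m(1)·C·m(1)⁻¹, m(∞)·C·m(∞)⁻¹ (induced by their inclusions into K(𝔽₂)) to K(𝔽₂) is an isomorphism of groups. -/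
open Matrix MatrixGroups Polynomial LaurentPolynomial

namespace Paper

variable (R : Type) [CommRing R]

def wSL : SL(2, R) := ⟨!![0, 1; -1, 0], by simp [Matrix.det_fin_two_of]⟩

/-- `-1` in `SL₂`. -/
def negI : SL(2, R) := ⟨-1, by simp [Matrix.det_fin_two]⟩

variable {R}

lemma elUp_mul (r s : R) : elUp R r * elUp R s = elUp R (r + s) := by
  apply Subtype.ext
  show (elUp R r).1 * (elUp R s).1 = _
  simp [elUp, Matrix.mul_fin_two]
  ring_nf

lemma elUp_mem (r : R) : elUp R r ∈ Esub R := Subgroup.subset_closure (Or.inl ⟨r, rfl⟩)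
lemma elLow_mem (r : R) : elLow R r ∈ Esub R := Subgroup.subset_closure (Or.inr ⟨r, rfl⟩)

lemma w_eq : elUp R 1 * elLow R (-1) * elUp R 1 = wSL R := by
  apply Subtype.ext
  show (elUp R 1).1 * (elLow R (-1)).1 * (elUp R 1).1 = _
  simp [elUp, elLow, wSL, Matrix.mul_fin_two]

lemma negI_eq : wSL R * wSL R = negI R := by
  apply Subtype.ext
  show (!![0, 1; -1, 0] : Matrix (Fin 2) (Fin 2) R) * !![0, 1; -1, 0] = (-1 : Matrix (Fin 2) (Fin 2) R)
  rw [Matrix.mul_fin_two]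
  ext i j
  fin_cases i <;> fin_cases j <;> simp [Matrix.one_apply]

lemma wSL_mem : wSL R ∈ Esub R := by
  rw [← w_eq]
  exact Subgroup.mul_mem _ (Subgroup.mul_mem _ (elUp_mem 1) (elLow_mem (-1))) (elUp_mem 1)

lemma negI_mem : (negI R : SL(2,R)) ∈ Esub R := by
  rw [← negI_eq]; exact Subgroup.mul_mem _ wSL_mem wSL_mem

end Paper
namespace Paper

lemma natAbs_emod_lt {a c : ℤ} (h : c ≠ 0) : (a % c).natAbs < c.natAbs := by
  have h1 : 0 ≤ a % c := Int.emod_nonneg a h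
  have h2 : a % |c| < |c| := Int.emod_lt_of_pos a (abs_pos.mpr h)
  rw [Int.emod_abs] at h2
  have : |c| = c.natAbs := Int.abs_eq_natAbs c
  omega

/-- `SL₂(ℤ)` is generated by the elementary matrices. -/
theorem SL2Z_mem_Esub (A : SL(2, ℤ)) : A ∈ Esub ℤ := by
  suffices H : ∀ n : ℕ, ∀ A : SL(2, ℤ), (A.1 1 0).natAbs = n → A ∈ Esub ℤ from H _ A rfl
  intro n
  induction n using Nat.strong_induction_on with
  | _ n ih =>
    intro A
    induction A using Matrix.SpecialLinearGroup.fin_two_induction with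
    | _ a b c d hdet =>
      intro hc
      have hc' : c.natAbs = n := by simpa using hc
      by_cases h0 : c = 0
      · subst h0
        have had : a * d = 1 := by linarith [hdet]
        rcases Int.mul_eq_one_iff_eq_one_or_neg_one.mp had with ⟨ha, hd⟩ | ⟨ha, hd⟩
        · subst ha; subst hd
          have : (⟨!![1, b; 0, 1], by rwa [Matrix.det_fin_two_of]⟩ : SL(2, ℤ)) = elUp ℤ b :=
            Subtype.ext rfl
          rw [this]
          exact elUp_mem b
        · subst ha; subst hd
          have : (⟨!![-1, b; 0, -1], by rwa [Matrix.det_fin_two_of]⟩ : SL(2, ℤ))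
              = negI ℤ * elUp ℤ (-b) := by
            apply Subtype.ext
            show !![(-1 : ℤ), b; 0, -1] = (negI ℤ).1 * (elUp ℤ (-b)).1
            show !![(-1 : ℤ), b; 0, -1] = (-1 : Matrix (Fin 2) (Fin 2) ℤ) * !![1, -b; 0, 1]
            rw [neg_one_mul]
            ext i j
            fin_cases i <;> fin_cases j <;> simp
          rw [this]
          exact Subgroup.mul_mem _ negI_mem (elUp_mem (-b))
      · -- inductive step
        set A' : SL(2, ℤ) := ⟨!![a, b; c, d], by rwa [Matrix.det_fin_two_of]⟩ with hA'
        set N : SL(2, ℤ) := wSL ℤ * elUp ℤ (-(a / c)) with hN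
        have hNcoe : (N : Matrix (Fin 2) (Fin 2) ℤ) = !![0, 1; -1, a / c] := by
          show (!![0, 1; -1, 0] : Matrix (Fin 2) (Fin 2) ℤ) * !![1, -(a / c); 0, 1] = _
          rw [Matrix.mul_fin_two]
          norm_num
        have hentry : ((N * A').1) 1 0 = -(a % c) := by
          rw [entry10, hNcoe]
          have e1 : (!![(0 : ℤ), 1; -1, a / c]) 1 0 = -1 := by simp
          have e2 : (!![(0 : ℤ), 1; -1, a / c]) 1 1 = a / c := by simp
          have e3 : (A'.1) 0 0 = a := by simp [hA']
          have e4 : (A'.1) 1 0 = c := by simp [hA']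
          rw [e1, e2, e3, e4, Int.emod_def]
          ring
        have hlt : (((N * A').1) 1 0).natAbs < n := by
          rw [hentry]
          rw [Int.natAbs_neg]
          rw [← hc']
          exact natAbs_emod_lt h0
        have hNA : N * A' ∈ Esub ℤ := ih _ hlt (N * A') rfl
        have hNmem : N ∈ Esub ℤ := Subgroup.mul_mem _ wSL_mem (elUp_mem _)
        have heq : A' = N⁻¹ * (N * A') := by group
        rw [heq]
        exact Subgroup.mul_mem _ (Subgroup.inv_mem _ hNmem) hNA

end Paper
namespace Paper

variable {R S : Type} [CommRing R] [CommRing S]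

lemma map_coe (f : R →+* S) (A : SL(2, R)) :
    ((Matrix.SpecialLinearGroup.map f A) : Matrix (Fin 2) (Fin 2) S) = A.1.map f := rfl

lemma map_entry (f : R →+* S) (A : SL(2, R)) (i j : Fin 2) :
    (Matrix.SpecialLinearGroup.map f A).1 i j = f (A.1 i j) := by
  rw [map_coe, Matrix.map_apply]

lemma map_elUp (f : R →+* S) (r : R) :
    Matrix.SpecialLinearGroup.map f (elUp R r) = elUp S (f r) := by
  apply Subtype.ext
  rw [map_coe]
  show (!![1, r; 0, 1] : Matrix (Fin 2) (Fin 2) R).map f = !![1, f r; 0, 1]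
  ext i j
  fin_cases i <;> fin_cases j <;> simp [Matrix.map_apply]

lemma map_elLow (f : R →+* S) (r : R) :
    Matrix.SpecialLinearGroup.map f (elLow R r) = elLow S (f r) := by
  apply Subtype.ext
  rw [map_coe]
  show (!![1, 0; r, 1] : Matrix (Fin 2) (Fin 2) R).map f = !![1, 0; f r, 1]
  ext i j
  fin_cases i <;> fin_cases j <;> simp [Matrix.map_apply]

lemma map_Esub_le (f : R →+* S) :
    (Esub R).map (Matrix.SpecialLinearGroup.map f) ≤ Esub S := by
  rw [Esub, MonoidHom.map_closure]
  rw [Subgroup.closure_le]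
  rintro _ ⟨A, hA, rfl⟩
  rcases hA with ⟨r, rfl⟩ | ⟨r, rfl⟩
  · rw [map_elUp]; exact elUp_mem _
  · rw [map_elLow]; exact elLow_mem _

lemma elUp_zero : elUp R 0 = 1 := by
  apply Subtype.ext
  show !![1, (0 : R); 0, 1] = 1
  rw [← Matrix.one_fin_two]

/-- The upper triangular subgroup of `SL₂(ℤ[t])` is contained in `E₂(ℤ[t])`. -/
lemma Bsub_polyZ_le_Esub : Bsub (Polynomial ℤ) ≤ Esub (Polynomial ℤ) := by
  intro A hA
  have h10 : A.1 1 0 = 0 := hA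
  have hdet : A.1 0 0 * A.1 1 1 = 1 := by
    have h := A.2
    rw [Matrix.det_fin_two, h10, mul_zero, sub_zero] at h
    exact h
  obtain ⟨u, hu1, hu2⟩ := Polynomial.isUnit_iff.mp (IsUnit.of_mul_eq_one _ hdet)
  rcases Int.isUnit_iff.mp hu1 with h1 | h1
  · -- a = 1
    have h00 : A.1 0 0 = 1 := by rw [← hu2, h1]; simp
    have h11 : A.1 1 1 = 1 := by rw [h00, one_mul] at hdet; exact hdet
    have : A = elUp (Polynomial ℤ) (A.1 0 1) := by
      apply Subtype.ext
      show A.1 = !![1, A.1 0 1; 0, 1]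
      conv_lhs => rw [Matrix.eta_fin_two A.1]
      rw [h00, h10, h11]
    rw [this]
    exact elUp_mem _
  · -- a = -1
    have h00 : A.1 0 0 = -1 := by rw [← hu2, h1]; simp
    have h11 : A.1 1 1 = -1 := by
      have := hdet
      rw [h00] at this
      linear_combination -this
    have : A = negI (Polynomial ℤ) * elUp (Polynomial ℤ) (-(A.1 0 1)) := by
      apply Subtype.ext
      show A.1 = (-1 : Matrix (Fin 2) (Fin 2) (Polynomial ℤ)) * !![1, -(A.1 0 1); 0, 1]
      rw [neg_one_mul]
      conv_lhs => rw [Matrix.eta_fin_two A.1]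
      rw [h00, h10, h11]
      ext i j
      fin_cases i <;> fin_cases j <;> simp
    rw [this]
    exact Subgroup.mul_mem _ negI_mem (elUp_mem _)

/-- The inclusion `SL₂(ℤ) ↪ E₂(ℤ[t])` induced by constant polynomials. -/
noncomputable def SLZtoE : SL(2, ℤ) →* ↥(Esub (Polynomial ℤ)) :=
  (Matrix.SpecialLinearGroup.map (Polynomial.C : ℤ →+* Polynomial ℤ)).codRestrict
    (Esub (Polynomial ℤ))
    (fun A => map_Esub_le _ ⟨A, SL2Z_mem_Esub A, rfl⟩)

/-- The inclusion `B(ℤ) ↪ B(ℤ[t])` induced by constant polynomials. -/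
noncomputable def BZtoBZX : ↥(Bsub ℤ) →* ↥(Bsub (Polynomial ℤ)) :=
  ((Matrix.SpecialLinearGroup.map (Polynomial.C : ℤ →+* Polynomial ℤ)).comp
      (Bsub ℤ).subtype).codRestrict (Bsub (Polynomial ℤ))
    (fun A => by
      show (Matrix.SpecialLinearGroup.map (Polynomial.C : ℤ →+* Polynomial ℤ) A.1).1 1 0 = 0
      rw [map_entry]
      have h : A.1.1 1 0 = 0 := A.2
      rw [h, map_zero])

/-- The inclusion `B(ℤ[t]) ↪ E₂(ℤ[t])`. -/
noncomputable def BZXtoE : ↥(Bsub (Polynomial ℤ)) →* ↥(Esub (Polynomial ℤ)) :=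
  Subgroup.inclusion Bsub_polyZ_le_Esub

end Paper
namespace Paper

/-- The subgroup `C` of matrices `(1, t·p; 0, 1)`. -/
noncomputable def Csub : Subgroup SL(2, Polynomial (ZMod 2)) where
  carrier := {A | ∃ p : Polynomial (ZMod 2), A = elUp (Polynomial (ZMod 2)) (X * p)}
  one_mem' := ⟨0, by rw [mul_zero, elUp_zero]⟩
  mul_mem' := by
    rintro A B ⟨p, rfl⟩ ⟨q, rfl⟩
    exact ⟨p + q, by rw [elUp_mul, mul_add]⟩
  inv_mem' := by
    rintro A ⟨p, rfl⟩
    refine ⟨-p, ?_⟩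
    have : elUp (Polynomial (ZMod 2)) (X * p) * elUp (Polynomial (ZMod 2)) (X * -p) = 1 := by
      rw [elUp_mul, ← mul_add, add_neg_cancel, mul_zero, elUp_zero]
    rw [inv_eq_of_mul_eq_one_right this]

/-- The congruence subgroup `K(𝔽₂)` of matrices congruent to the identity modulo `t`,
i.e. the kernel of reduction modulo `t`. -/
noncomputable def Ksub : Subgroup SL(2, Polynomial (ZMod 2)) :=
  MonoidHom.ker (Matrix.SpecialLinearGroup.map
    (Polynomial.constantCoeff : Polynomial (ZMod 2) →+* ZMod 2))

/-- The matrices `m(0) = 1`, `m(1) = (1 0; 1 1)`, `m(∞) = (0 1; 1 0)`. -/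
noncomputable def mmat : Fin 3 → SL(2, Polynomial (ZMod 2))
  | 0 => 1
  | 1 => elLow (Polynomial (ZMod 2)) 1
  | 2 => ⟨!![0, 1; 1, 0], by
      rw [Matrix.det_fin_two_of]
      have h2 : (1 : Polynomial (ZMod 2)) + 1 = 0 := by
        rw [← Polynomial.C_1, ← Polynomial.C_add]
        rw [show (1 : ZMod 2) + 1 = 0 from by decide, Polynomial.C_0]
      linear_combination -h2⟩

/-- The conjugate subgroups `m(s)·C·m(s)⁻¹`. -/
noncomputable def conjC (i : Fin 3) : Subgroup SL(2, Polynomial (ZMod 2)) :=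
  Csub.map (MulAut.conj (mmat i)).toMonoidHom

lemma Csub_le_Ksub : Csub ≤ Ksub := by
  rintro _ ⟨p, rfl⟩
  show Matrix.SpecialLinearGroup.map _ (elUp (Polynomial (ZMod 2)) (X * p)) = 1
  rw [map_elUp]
  have : Polynomial.constantCoeff (X * p) = 0 := by
    rw [_root_.map_mul]
    rw [show Polynomial.constantCoeff (X : Polynomial (ZMod 2)) = 0 from Polynomial.coeff_X_zero]
    rw [zero_mul]
  rw [this, elUp_zero]

lemma conjC_le_Ksub (i : Fin 3) : conjC i ≤ Ksub := by
  rintro _ ⟨A, hA, rfl⟩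
  exact (MonoidHom.normal_ker _).conj_mem _ (Csub_le_Ksub hA) _

end Paper

namespace Paper

local notation "PP" => Polynomial (ZMod 2)

lemma two_eq_zero : (2 : PP) = 0 := by
  simpa using (CharP.cast_eq_zero PP 2)

lemma zmod2_ne_zero : ∀ x : ZMod 2, x ≠ 0 → x = 1 := by decide

lemma monic_of_ne_zero {d : PP} (hd : d ≠ 0) : d.Monic :=
  zmod2_ne_zero _ (Polynomial.leadingCoeff_ne_zero.mpr hd)

/-- Division with remainder with quotient divisible by `X`. -/
lemma reduce (a : PP) {d : PP} (hd : d ≠ 0) :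
    ∃ q : PP, (a + X * q * d).degree ≤ d.degree := by
  have hm := monic_of_ne_zero hd
  refine ⟨(a /ₘ d).divX, ?_⟩
  have h1 : a %ₘ d + d * (a /ₘ d) = a := Polynomial.modByMonic_add_div a d
  have h2 : (a /ₘ d).divX * X + Polynomial.C ((a /ₘ d).coeff 0) = a /ₘ d :=
    Polynomial.divX_mul_X_add _
  have htwo : (2 : PP) = 0 := two_eq_zero
  have key : a + X * (a /ₘ d).divX * d
      = a %ₘ d + Polynomial.C ((a /ₘ d).coeff 0) * d := by
    linear_combination -h1 + d * h2 +
      (d * (a /ₘ d) - Polynomial.C ((a /ₘ d).coeff 0) * d) * htwo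
  rw [key]
  refine le_trans (Polynomial.degree_add_le _ _) (max_le ?_ ?_)
  · exact le_of_lt (Polynomial.degree_modByMonic_lt a hm)
  · calc (Polynomial.C ((a /ₘ d).coeff 0) * d).degree
        ≤ (Polynomial.C ((a /ₘ d).coeff 0)).degree + d.degree := Polynomial.degree_mul_le _ _
      _ ≤ 0 + d.degree := add_le_add_left Polynomial.degree_C_le _
      _ = d.degree := by rw [zero_add]

lemma deg_lt_Xmul {p b : PP} (hp : p ≠ 0) (hb : b ≠ 0) :
    b.degree < (X * p * b).degree := by
  have h1 : b.degree ≤ (b * p).degree := Polynomial.degree_le_mul_left b hp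
  have h2 : (b * p).degree < ((b * p) * X).degree :=
    Polynomial.degree_lt_degree_mul_X (mul_ne_zero hb hp)
  have h3 : (b * p) * X = X * p * b := by ring
  rw [h3] at h2
  exact lt_of_le_of_lt h1 h2

lemma deg_add_lt {a b : PP} (ha : a ≠ 0) (hb : b ≠ 0) (h : a.degree = b.degree) :
    (a + b).degree < a.degree := by
  have e : a + b = a - b := by rw [sub_eq_add_neg, CharTwo.neg_eq]
  rw [e]
  refine Polynomial.degree_sub_lt h ha ?_
  rw [zmod2_ne_zero _ (Polynomial.leadingCoeff_ne_zero.mpr ha),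
    zmod2_ne_zero _ (Polynomial.leadingCoeff_ne_zero.mpr hb)]

/-- The generator `(1+tp, tp; tp, 1+tp)` of the middle factor. -/
noncomputable def gM (p : PP) : SL(2, PP) :=
  ⟨!![1 + X*p, X*p; X*p, 1 + X*p], by
    rw [Matrix.det_fin_two_of]
    linear_combination (X*p) * two_eq_zero⟩

lemma gU00 (p : PP) : (elUp PP (X*p)).1 0 0 = 1 := by simp [elUp]
lemma gU01 (p : PP) : (elUp PP (X*p)).1 0 1 = X*p := by simp [elUp]
lemma gU10 (p : PP) : (elUp PP (X*p)).1 1 0 = 0 := by simp [elUp]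
lemma gU11 (p : PP) : (elUp PP (X*p)).1 1 1 = 1 := by simp [elUp]
lemma gL00 (p : PP) : (elLow PP (X*p)).1 0 0 = 1 := by simp [elLow]
lemma gL01 (p : PP) : (elLow PP (X*p)).1 0 1 = 0 := by simp [elLow]
lemma gL10 (p : PP) : (elLow PP (X*p)).1 1 0 = X*p := by simp [elLow]
lemma gL11 (p : PP) : (elLow PP (X*p)).1 1 1 = 1 := by simp [elLow]
lemma gM00 (p : PP) : (gM p).1 0 0 = 1 + X*p := by simp [gM]
lemma gM01 (p : PP) : (gM p).1 0 1 = X*p := by simp [gM]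
lemma gM10 (p : PP) : (gM p).1 1 0 = X*p := by simp [gM]
lemma gM11 (p : PP) : (gM p).1 1 1 = 1 + X*p := by simp [gM]

lemma gM_zero : gM 0 = 1 := by
  apply Subtype.ext
  show (!![1 + X*0, X*0; X*0, 1 + X*0] : Matrix (Fin 2) (Fin 2) PP) = 1
  refine Matrix.ext fun i j => ?_
  fin_cases i <;> fin_cases j <;> simp [Matrix.one_apply]

lemma mmat1_sq : mmat 1 * mmat 1 = 1 := by
  apply Subtype.ext
  show (!![1, 0; 1, 1] : Matrix (Fin 2) (Fin 2) PP) * !![1, 0; 1, 1] = 1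
  rw [Matrix.mul_fin_two]
  refine Matrix.ext fun i j => ?_
  fin_cases i <;> fin_cases j
  · show 1*1 + 0*1 = (1 : Matrix (Fin 2) (Fin 2) PP) 0 0
    simp [Matrix.one_apply]
  · show 1*0 + 0*1 = (1 : Matrix (Fin 2) (Fin 2) PP) 0 1
    simp [Matrix.one_apply]
  · show 1*1 + 1*1 = (1 : Matrix (Fin 2) (Fin 2) PP) 1 0
    rw [show (1 : Matrix (Fin 2) (Fin 2) PP) 1 0 = 0 by simp [Matrix.one_apply]]
    linear_combination two_eq_zero
  · show 1*0 + 1*1 = (1 : Matrix (Fin 2) (Fin 2) PP) 1 1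
    simp [Matrix.one_apply]

lemma mmat2_sq : mmat 2 * mmat 2 = 1 := by
  apply Subtype.ext
  show (!![0, 1; 1, 0] : Matrix (Fin 2) (Fin 2) PP) * !![0, 1; 1, 0] = 1
  rw [Matrix.mul_fin_two]
  refine Matrix.ext fun i j => ?_
  fin_cases i <;> fin_cases j <;> simp [Matrix.one_apply]

lemma mmat1_inv : (mmat 1)⁻¹ = mmat 1 := inv_eq_of_mul_eq_one_right mmat1_sq
lemma mmat2_inv : (mmat 2)⁻¹ = mmat 2 := inv_eq_of_mul_eq_one_right mmat2_sq

lemma conj_mmat1 (p : PP) : mmat 1 * elUp PP (X*p) * (mmat 1)⁻¹ = gM p := by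
  rw [mmat1_inv]
  apply Subtype.ext
  show (!![1, 0; 1, 1] : Matrix (Fin 2) (Fin 2) PP) * !![1, X*p; 0, 1] * !![1, 0; 1, 1]
      = !![1 + X*p, X*p; X*p, 1 + X*p]
  rw [Matrix.mul_fin_two, Matrix.mul_fin_two]
  refine Matrix.ext fun i j => ?_
  fin_cases i <;> fin_cases j
  · show (1*1 + 0*0)*1 + (1*(X*p) + 0*1)*1 = 1 + X*p
    ring
  · show (1*1 + 0*0)*0 + (1*(X*p) + 0*1)*1 = X*p
    ring
  · show (1*1 + 1*0)*1 + (1*(X*p) + 1*1)*1 = X*p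
    linear_combination two_eq_zero
  · show (1*1 + 1*0)*0 + (1*(X*p) + 1*1)*1 = 1 + X*p
    ring

lemma conj_mmat2 (p : PP) : mmat 2 * elUp PP (X*p) * (mmat 2)⁻¹ = elLow PP (X*p) := by
  rw [mmat2_inv]
  apply Subtype.ext
  show (!![0, 1; 1, 0] : Matrix (Fin 2) (Fin 2) PP) * !![1, X*p; 0, 1] * !![0, 1; 1, 0]
      = !![1, 0; X*p, 1]
  rw [Matrix.mul_fin_two, Matrix.mul_fin_two]
  refine Matrix.ext fun i j => ?_
  fin_cases i <;> fin_cases j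
  · show (0*1 + 1*0)*0 + (0*(X*p) + 1*1)*1 = 1
    ring
  · show (0*1 + 1*0)*1 + (0*(X*p) + 1*1)*0 = 0
    ring
  · show (1*1 + 0*0)*0 + (1*(X*p) + 0*1)*1 = X*p
    ring
  · show (1*1 + 0*0)*1 + (1*(X*p) + 0*1)*0 = 1
    ring

lemma mem_conjC0 {A : SL(2, PP)} : A ∈ conjC 0 ↔ ∃ p : PP, A = elUp PP (X*p) := by
  constructor
  · rintro ⟨B, ⟨p, rfl⟩, rfl⟩
    refine ⟨p, ?_⟩
    show mmat 0 * _ * (mmat 0)⁻¹ = _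
    show (1 : SL(2,PP)) * _ * (1 : SL(2,PP))⁻¹ = _
    rw [inv_one, one_mul, mul_one]
  · rintro ⟨p, rfl⟩
    exact ⟨elUp PP (X*p), ⟨p, rfl⟩, by
      show mmat 0 * _ * (mmat 0)⁻¹ = _
      show (1 : SL(2,PP)) * _ * (1 : SL(2,PP))⁻¹ = _
      rw [inv_one, one_mul, mul_one]⟩

lemma mem_conjC1 {A : SL(2, PP)} : A ∈ conjC 1 ↔ ∃ p : PP, A = gM p := by
  constructor
  · rintro ⟨B, ⟨p, rfl⟩, rfl⟩
    exact ⟨p, by rw [show (MulAut.conj (mmat 1)).toMonoidHom (elUp PP (X*p))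
      = mmat 1 * elUp PP (X*p) * (mmat 1)⁻¹ from rfl, conj_mmat1]⟩
  · rintro ⟨p, rfl⟩
    exact ⟨elUp PP (X*p), ⟨p, rfl⟩, by
      rw [show (MulAut.conj (mmat 1)).toMonoidHom (elUp PP (X*p))
        = mmat 1 * elUp PP (X*p) * (mmat 1)⁻¹ from rfl, conj_mmat1]⟩

lemma mem_conjC2 {A : SL(2, PP)} : A ∈ conjC 2 ↔ ∃ p : PP, A = elLow PP (X*p) := by
  constructor
  · rintro ⟨B, ⟨p, rfl⟩, rfl⟩
    exact ⟨p, by rw [show (MulAut.conj (mmat 2)).toMonoidHom (elUp PP (X*p))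
      = mmat 2 * elUp PP (X*p) * (mmat 2)⁻¹ from rfl, conj_mmat2]⟩
  · rintro ⟨p, rfl⟩
    exact ⟨elUp PP (X*p), ⟨p, rfl⟩, by
      rw [show (MulAut.conj (mmat 2)).toMonoidHom (elUp PP (X*p))
        = mmat 2 * elUp PP (X*p) * (mmat 2)⁻¹ from rfl, conj_mmat2]⟩


set_option synthInstance.maxHeartbeats 1000000

noncomputable instance : MulAction SL(2, PP) (Fin 2 → PP) where
  smul A v := A.1.mulVec v
  one_smul v := by show (1 : SL(2,PP)).1.mulVec v = v; simp
  mul_smul A B v := by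
    show (A*B).1.mulVec v = A.1.mulVec (B.1.mulVec v)
    rw [Matrix.SpecialLinearGroup.coe_mul, Matrix.mulVec_mulVec]

lemma smul_apply0 (A : SL(2,PP)) (v : Fin 2 → PP) :
    (A • v) 0 = A.1 0 0 * v 0 + A.1 0 1 * v 1 := by
  show A.1.mulVec v 0 = _
  simp [Matrix.mulVec, dotProduct, Fin.sum_univ_two]

lemma smul_apply1 (A : SL(2,PP)) (v : Fin 2 → PP) :
    (A • v) 1 = A.1 1 0 * v 0 + A.1 1 1 * v 1 := by
  show A.1.mulVec v 1 = _
  simp [Matrix.mulVec, dotProduct, Fin.sum_univ_two]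

/-- The ping-pong sets. -/
def Y : Fin 3 → Set (Fin 2 → PP)
  | 0 => {v | (v 1).degree < (v 0).degree}
  | 1 => {v | v 0 ≠ 0 ∧ (v 0).degree = (v 1).degree}
  | 2 => {v | (v 0).degree < (v 1).degree}

lemma gU_smul_mem {p : PP} (hp : p ≠ 0) {v : Fin 2 → PP}
    (h0 : (v 0).degree ≤ (v 1).degree) (h1 : v 1 ≠ 0) :
    (elUp PP (X*p)) • v ∈ Y 0 := by
  have e0 : ((elUp PP (X*p)) • v) 0 = v 0 + X*p*(v 1) := by
    rw [smul_apply0, gU00, gU01, one_mul]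
  have e1 : ((elUp PP (X*p)) • v) 1 = v 1 := by
    rw [smul_apply1, gU10, gU11, zero_mul, one_mul, zero_add]
  show (((elUp PP (X*p)) • v) 1).degree < (((elUp PP (X*p)) • v) 0).degree
  rw [e0, e1]
  have hlt : (v 0).degree < (X*p*(v 1)).degree := lt_of_le_of_lt h0 (deg_lt_Xmul hp h1)
  rw [Polynomial.degree_add_eq_right_of_degree_lt hlt]
  exact deg_lt_Xmul hp h1

lemma gL_smul_mem {p : PP} (hp : p ≠ 0) {v : Fin 2 → PP}
    (h0 : (v 1).degree ≤ (v 0).degree) (h1 : v 0 ≠ 0) :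
    (elLow PP (X*p)) • v ∈ Y 2 := by
  have e0 : ((elLow PP (X*p)) • v) 0 = v 0 := by
    rw [smul_apply0, gL00, gL01, one_mul, zero_mul, add_zero]
  have e1 : ((elLow PP (X*p)) • v) 1 = v 1 + X*p*(v 0) := by
    rw [smul_apply1, gL10, gL11, one_mul, add_comm]
  show (((elLow PP (X*p)) • v) 0).degree < (((elLow PP (X*p)) • v) 1).degree
  rw [e0, e1]
  have hlt : (v 1).degree < (X*p*(v 0)).degree := lt_of_le_of_lt h0 (deg_lt_Xmul hp h1)
  rw [Polynomial.degree_add_eq_right_of_degree_lt hlt]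
  exact deg_lt_Xmul hp h1

lemma gM_smul_mem {p : PP} (hp : p ≠ 0) {v : Fin 2 → PP}
    (hs : v 0 + v 1 ≠ 0)
    (h0 : (v 0).degree ≤ (v 0 + v 1).degree) (h1 : (v 1).degree ≤ (v 0 + v 1).degree) :
    (gM p) • v ∈ Y 1 := by
  set s : PP := v 0 + v 1 with hsdef
  have e0 : ((gM p) • v) 0 = v 0 + X*p*s := by
    rw [smul_apply0, gM00, gM01, hsdef]; ring
  have e1 : ((gM p) • v) 1 = v 1 + X*p*s := by
    rw [smul_apply1, gM10, gM11, hsdef]; ring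
  have hXs : s.degree < (X*p*s).degree := deg_lt_Xmul hp hs
  have hd0 : (v 0).degree < (X*p*s).degree := lt_of_le_of_lt h0 hXs
  have hd1 : (v 1).degree < (X*p*s).degree := lt_of_le_of_lt h1 hXs
  have hE0 : ((gM p) • v) 0 ≠ 0 := by
    rw [e0]
    intro hzero
    rw [← Polynomial.degree_eq_bot] at hzero
    rw [Polynomial.degree_add_eq_right_of_degree_lt hd0, Polynomial.degree_eq_bot] at hzero
    exact (mul_ne_zero (mul_ne_zero Polynomial.X_ne_zero hp) hs) hzero
  show ((gM p) • v) 0 ≠ 0 ∧ (((gM p) • v) 0).degree = (((gM p) • v) 1).degree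
  refine ⟨hE0, ?_⟩
  rw [e0, e1, Polynomial.degree_add_eq_right_of_degree_lt hd0,
    Polynomial.degree_add_eq_right_of_degree_lt hd1]

lemma neOne_exists {i : Fin 3} (h : ↥(conjC i)) (hne : h ≠ 1) :
    (i = 0 → ∃ p : PP, p ≠ 0 ∧ (h : SL(2,PP)) = elUp PP (X*p)) ∧
    (i = 1 → ∃ p : PP, p ≠ 0 ∧ (h : SL(2,PP)) = gM p) ∧
    (i = 2 → ∃ p : PP, p ≠ 0 ∧ (h : SL(2,PP)) = elLow PP (X*p)) := by
  have hne' : (h : SL(2,PP)) ≠ 1 := fun e => hne (Subtype.ext e)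
  refine ⟨?_, ?_, ?_⟩
  · rintro rfl
    obtain ⟨p, hp⟩ := mem_conjC0.mp h.2
    refine ⟨p, ?_, hp⟩
    rintro rfl
    exact hne' (by rw [hp, mul_zero, elUp_zero])
  · rintro rfl
    obtain ⟨p, hp⟩ := mem_conjC1.mp h.2
    refine ⟨p, ?_, hp⟩
    rintro rfl
    exact hne' (by rw [hp, gM_zero])
  · rintro rfl
    obtain ⟨p, hp⟩ := mem_conjC2.mp h.2
    refine ⟨p, ?_, hp⟩
    rintro rfl
    refine hne' ?_
    rw [hp]
    apply Subtype.ext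
    show (!![1, 0; X*(0:PP), 1] : Matrix (Fin 2) (Fin 2) PP) = 1
    refine Matrix.ext fun i j => ?_
    fin_cases i <;> fin_cases j <;> simp [Matrix.one_apply]

lemma Ydisj : Pairwise (Function.onFun Disjoint Y) := by
  intro i j hij
  fin_cases i <;> fin_cases j
  · exact absurd rfl hij
  · refine Set.disjoint_left.mpr ?_
    rintro v hv hw
    have hv' : (v 1).degree < (v 0).degree := hv
    have hw' : v 0 ≠ 0 ∧ (v 0).degree = (v 1).degree := hw
    rw [hw'.2] at hv'
    exact lt_irrefl _ hv'
  · refine Set.disjoint_left.mpr ?_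
    rintro v hv hw
    have hv' : (v 1).degree < (v 0).degree := hv
    have hw' : (v 0).degree < (v 1).degree := hw
    exact lt_asymm hv' hw'
  · refine Set.disjoint_left.mpr ?_
    rintro v hv hw
    have hv' : v 0 ≠ 0 ∧ (v 0).degree = (v 1).degree := hv
    have hw' : (v 1).degree < (v 0).degree := hw
    rw [hv'.2] at hw'
    exact lt_irrefl _ hw'
  · exact absurd rfl hij
  · refine Set.disjoint_left.mpr ?_
    rintro v hv hw
    have hv' : v 0 ≠ 0 ∧ (v 0).degree = (v 1).degree := hv
    have hw' : (v 0).degree < (v 1).degree := hw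
    rw [hv'.2] at hw'
    exact lt_irrefl _ hw'
  · refine Set.disjoint_left.mpr ?_
    rintro v hv hw
    have hv' : (v 0).degree < (v 1).degree := hv
    have hw' : (v 1).degree < (v 0).degree := hw
    exact lt_asymm hv' hw'
  · refine Set.disjoint_left.mpr ?_
    rintro v hv hw
    have hv' : (v 0).degree < (v 1).degree := hv
    have hw' : v 0 ≠ 0 ∧ (v 0).degree = (v 1).degree := hw
    rw [hw'.2] at hv'
    exact lt_irrefl _ hv'
  · exact absurd rfl hij

lemma Ynonempty : ∀ i : Fin 3, (Y i).Nonempty := by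
  intro i
  fin_cases i
  · refine ⟨![1, 0], ?_⟩
    show ((![1, 0] : Fin 2 → PP) 1).degree < ((![1, 0] : Fin 2 → PP) 0).degree
    show (0 : PP).degree < (1 : PP).degree
    rw [Polynomial.degree_zero, Polynomial.degree_one]
    exact Batteries.compareOfLessAndEq_eq_lt.mp rfl
  · refine ⟨![1, 1], ?_⟩
    exact ⟨one_ne_zero, rfl⟩
  · refine ⟨![0, 1], ?_⟩
    show ((![0, 1] : Fin 2 → PP) 0).degree < ((![0, 1] : Fin 2 → PP) 1).degree
    show (0 : PP).degree < (1 : PP).degree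
    rw [Polynomial.degree_zero, Polynomial.degree_one]
    exact Batteries.compareOfLessAndEq_eq_lt.mp rfl

open Pointwise in
lemma smul_sub_def (g : ↥Ksub) (v : Fin 2 → PP) : g • v = (g : SL(2,PP)) • v := rfl

open Pointwise in
lemma Ypp : Pairwise fun i j => ∀ h : ↥(conjC i), h ≠ 1 →
    (Subgroup.inclusion (conjC_le_Ksub i)) h • Y j ⊆ Y i := by
  intro i j hij h hne
  rintro _ ⟨v, hv, rfl⟩
  have key := neOne_exists h hne
  show ((Subgroup.inclusion (conjC_le_Ksub i)) h) • v ∈ Y i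
  have hincl : ((Subgroup.inclusion (conjC_le_Ksub i)) h • v) = (h : SL(2,PP)) • v := rfl
  rw [hincl]
  fin_cases i <;> fin_cases j
  · exact absurd rfl hij
  · -- i = 0, j = 1
    obtain ⟨p, hp, hval⟩ := key.1 rfl
    rw [hval]
    have hv' : v 0 ≠ 0 ∧ (v 0).degree = (v 1).degree := hv
    have hv1 : v 1 ≠ 0 := by
      intro hz
      rw [hz, Polynomial.degree_zero] at hv'
      exact hv'.1 (Polynomial.degree_eq_bot.mp hv'.2)
    exact gU_smul_mem hp (le_of_eq hv'.2) hv1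
  · -- i = 0, j = 2
    obtain ⟨p, hp, hval⟩ := key.1 rfl
    rw [hval]
    have hv' : (v 0).degree < (v 1).degree := hv
    exact gU_smul_mem hp (le_of_lt hv') (Polynomial.ne_zero_of_degree_gt hv')
  · -- i = 1, j = 0
    obtain ⟨p, hp, hval⟩ := key.2.1 rfl
    rw [hval]
    have hv' : (v 1).degree < (v 0).degree := hv
    have hds : (v 0 + v 1).degree = (v 0).degree :=
      Polynomial.degree_add_eq_left_of_degree_lt hv'
    have hs : v 0 + v 1 ≠ 0 := by
      intro hz
      rw [hz, Polynomial.degree_zero] at hds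
      exact Polynomial.ne_zero_of_degree_gt hv' (Polynomial.degree_eq_bot.mp hds.symm)
    exact gM_smul_mem hp hs (le_of_eq hds.symm) (le_of_lt (hds ▸ hv'))
  · exact absurd rfl hij
  · -- i = 1, j = 2
    obtain ⟨p, hp, hval⟩ := key.2.1 rfl
    rw [hval]
    have hv' : (v 0).degree < (v 1).degree := hv
    have hds : (v 0 + v 1).degree = (v 1).degree :=
      Polynomial.degree_add_eq_right_of_degree_lt hv'
    have hs : v 0 + v 1 ≠ 0 := by
      intro hz
      rw [hz, Polynomial.degree_zero] at hds
      exact Polynomial.ne_zero_of_degree_gt hv' (Polynomial.degree_eq_bot.mp hds.symm)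
    exact gM_smul_mem hp hs (le_of_lt (hds ▸ hv')) (le_of_eq hds.symm)
  · -- i = 2, j = 0
    obtain ⟨p, hp, hval⟩ := key.2.2 rfl
    rw [hval]
    have hv' : (v 1).degree < (v 0).degree := hv
    exact gL_smul_mem hp (le_of_lt hv') (Polynomial.ne_zero_of_degree_gt hv')
  · -- i = 2, j = 1
    obtain ⟨p, hp, hval⟩ := key.2.2 rfl
    rw [hval]
    have hv' : v 0 ≠ 0 ∧ (v 0).degree = (v 1).degree := hv
    exact gL_smul_mem hp (le_of_eq hv'.2.symm) hv'.1
  · exact absurd rfl hij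

lemma lift_injective :
    Function.Injective
      (Monoid.CoprodI.lift (fun i : Fin 3 =>
        ((Subgroup.inclusion (conjC_le_Ksub i)) : ↥(conjC i) →* ↥Ksub))) := by
  refine Monoid.CoprodI.lift_injective_of_ping_pong _ ?_ Y Ynonempty Ydisj Ypp
  left
  rw [Cardinal.mk_fin]
  norm_num

lemma K_iff {A : SL(2, PP)} (hA : A ∈ Ksub) :
    Polynomial.constantCoeff (A.1 0 0) = 1 ∧ Polynomial.constantCoeff (A.1 0 1) = 0 ∧
      Polynomial.constantCoeff (A.1 1 0) = 0 := by
  have h : Matrix.SpecialLinearGroup.map (Polynomial.constantCoeff) A = 1 := hA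
  refine ⟨?_, ?_, ?_⟩
  · have := congrArg (fun M : SL(2, ZMod 2) => M.1 0 0) h
    simpa [map_entry, Matrix.SpecialLinearGroup.coe_one, Matrix.one_apply] using this
  · have := congrArg (fun M : SL(2, ZMod 2) => M.1 0 1) h
    simpa [map_entry, Matrix.SpecialLinearGroup.coe_one, Matrix.one_apply] using this
  · have := congrArg (fun M : SL(2, ZMod 2) => M.1 1 0) h
    simpa [map_entry, Matrix.SpecialLinearGroup.coe_one, Matrix.one_apply] using this

lemma natDeg_pos {c : PP} (h0 : Polynomial.constantCoeff c = 0) (hne : c ≠ 0) :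
    0 < c.natDegree := by
  by_contra h
  push_neg at h
  obtain ⟨x, rfl⟩ := Polynomial.natDegree_eq_zero.mp (Nat.le_zero.mp h)
  rw [Polynomial.constantCoeff_apply, Polynomial.coeff_C_zero] at h0
  exact hne (by rw [h0, map_zero])

lemma mem_conjC0_of_lower_zero {A : SL(2, PP)} (hA : A ∈ Ksub) (hc : A.1 1 0 = 0) :
    A ∈ conjC 0 := by
  obtain ⟨ha0, hb0, -⟩ := K_iff hA
  have hdet : A.1 0 0 * A.1 1 1 = 1 := by
    have h := A.2
    rw [Matrix.det_fin_two, hc, mul_zero, sub_zero] at h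
    exact h
  obtain ⟨u, hu1, hu2⟩ := Polynomial.isUnit_iff.mp (IsUnit.of_mul_eq_one _ hdet)
  have hu : u = 1 := by
    have h' : Polynomial.constantCoeff (A.1 0 0) = u := by
      rw [← hu2, Polynomial.constantCoeff_apply, Polynomial.coeff_C_zero]
    rw [← h', ha0]
  have h00 : A.1 0 0 = 1 := by rw [← hu2, hu, Polynomial.C_1]
  have h11 : A.1 1 1 = 1 := by rw [h00, one_mul] at hdet; exact hdet
  have hXb : X ∣ A.1 0 1 := by
    rw [Polynomial.X_dvd_iff, ← Polynomial.constantCoeff_apply, hb0]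
  refine mem_conjC0.mpr ⟨(A.1 0 1).divX, ?_⟩
  apply Subtype.ext
  show A.1 = !![1, X * (A.1 0 1).divX; 0, 1]
  rw [X_mul_divX hXb]
  conv_lhs => rw [Matrix.eta_fin_two A.1]
  rw [h00, hc, h11]

lemma lift_surjective :
    Function.Surjective
      (Monoid.CoprodI.lift (fun i : Fin 3 =>
        ((Subgroup.inclusion (conjC_le_Ksub i)) : ↥(conjC i) →* ↥Ksub))) := by
  have gen_mem : ∀ (i : Fin 3) (g : SL(2,PP)) (hg : g ∈ conjC i),
      (⟨g, conjC_le_Ksub i hg⟩ : ↥Ksub) ∈ (Monoid.CoprodI.lift (fun i : Fin 3 =>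
        ((Subgroup.inclusion (conjC_le_Ksub i)) : ↥(conjC i) →* ↥Ksub))).range := by
    intro i g hg
    exact ⟨Monoid.CoprodI.of (⟨g, hg⟩ : ↥(conjC i)), by
      rw [Monoid.CoprodI.lift_of]; rfl⟩
  have key : ∀ n : ℕ, ∀ A : ↥Ksub,
      ((A : SL(2,PP)).1 0 0).natDegree + ((A : SL(2,PP)).1 1 0).natDegree ≤ n →
      A ∈ (Monoid.CoprodI.lift (fun i : Fin 3 =>
        ((Subgroup.inclusion (conjC_le_Ksub i)) : ↥(conjC i) →* ↥Ksub))).range := by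
    intro n
    induction n using Nat.strong_induction_on with
    | _ n ih =>
      intro A hn
      obtain ⟨ha0, hb0, hc0⟩ := K_iff A.2
      by_cases hc : (A : SL(2,PP)).1 1 0 = 0
      · exact gen_mem 0 (A : SL(2,PP)) (mem_conjC0_of_lower_zero A.2 hc)
      · have ha : (A : SL(2,PP)).1 0 0 ≠ 0 := by
          intro h
          rw [h, map_zero] at ha0
          exact one_ne_zero ha0.symm
        set A' : SL(2,PP) := (A : SL(2,PP)) with hA'def
        have step : ∀ (i : Fin 3) (g : SL(2,PP)), g ∈ conjC i →
            (((g * A').1 0 0).natDegree + ((g * A').1 1 0).natDegree < n) →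
            A ∈ (Monoid.CoprodI.lift (fun i : Fin 3 =>
              ((Subgroup.inclusion (conjC_le_Ksub i)) : ↥(conjC i) →* ↥Ksub))).range := by
          intro i g hg hlt
          have hgK : g ∈ Ksub := conjC_le_Ksub i hg
          have hB : (⟨g, hgK⟩ : ↥Ksub) * A ∈ (Monoid.CoprodI.lift (fun i : Fin 3 =>
              ((Subgroup.inclusion (conjC_le_Ksub i)) : ↥(conjC i) →* ↥Ksub))).range :=
            ih _ hlt ((⟨g, hgK⟩ : ↥Ksub) * A) le_rfl
          have hAeq : A = (⟨g, hgK⟩ : ↥Ksub)⁻¹ * ((⟨g, hgK⟩ : ↥Ksub) * A) := by group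
          rw [hAeq]
          exact Subgroup.mul_mem _ (Subgroup.inv_mem _ (gen_mem i g hg)) hB
        rcases lt_trichotomy ((A' : Matrix (Fin 2) (Fin 2) PP) 1 0).degree
            ((A' : Matrix (Fin 2) (Fin 2) PP) 0 0).degree with hlt | heq | hgt
        · -- deg c < deg a : use upper elementary
          obtain ⟨q, hq⟩ := reduce (A'.1 0 0) hc
          refine step 0 (elUp PP (X*q)) (mem_conjC0.mpr ⟨q, rfl⟩) ?_
          have e00 : (elUp PP (X*q) * A').1 0 0 = A'.1 0 0 + X*q*(A'.1 1 0) := by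
            rw [entry00 PP (elUp PP (X*q)) A', gU00, gU01, one_mul]
          have e10 : (elUp PP (X*q) * A').1 1 0 = A'.1 1 0 := by
            rw [entry10 PP (elUp PP (X*q)) A', gU10, gU11, zero_mul, one_mul, zero_add]
          rw [e00, e10]
          have h1 : (A'.1 0 0 + X*q*(A'.1 1 0)).natDegree ≤ (A'.1 1 0).natDegree :=
            Polynomial.natDegree_le_natDegree hq
          have h2 : (A'.1 1 0).natDegree < (A'.1 0 0).natDegree :=
            Polynomial.natDegree_lt_natDegree hc hlt
          omega
        · -- deg c = deg a : use the middle generator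
          have hs : A'.1 0 0 + A'.1 1 0 ≠ 0 := by
            intro h
            have h' := congrArg Polynomial.constantCoeff h
            rw [_root_.map_add, ha0, hc0, add_zero, _root_.map_zero] at h'
            exact one_ne_zero h'
          have hds : (A'.1 0 0 + A'.1 1 0).degree < (A'.1 0 0).degree :=
            deg_add_lt ha hc heq.symm
          obtain ⟨q, hq⟩ := reduce (A'.1 0 0) hs
          refine step 1 (gM q) (mem_conjC1.mpr ⟨q, rfl⟩) ?_
          have e00 : (gM q * A').1 0 0
              = A'.1 0 0 + X*q*(A'.1 0 0 + A'.1 1 0) := by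
            rw [entry00 PP (gM q) A', gM00, gM01]; ring
          have e10 : (gM q * A').1 1 0
              = (A'.1 0 0 + X*q*(A'.1 0 0 + A'.1 1 0)) + (A'.1 0 0 + A'.1 1 0) := by
            rw [entry10 PP (gM q) A', gM10, gM11]
            first
              | linear_combination (A'.1 0 0) * two_eq_zero
              | linear_combination (-(A'.1 0 0)) * two_eq_zero
          rw [e00, e10]
          have hB00ne : A'.1 0 0 + X*q*(A'.1 0 0 + A'.1 1 0) ≠ 0 := by
            intro h
            have h' := congrArg Polynomial.constantCoeff h
            rw [_root_.map_add, ha0, _root_.map_mul, _root_.map_mul,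
              show Polynomial.constantCoeff (X : PP) = 0 from Polynomial.coeff_X_zero,
              zero_mul, zero_mul, add_zero, _root_.map_zero] at h'
            exact one_ne_zero h'
          have h1 : (A'.1 0 0 + X*q*(A'.1 0 0 + A'.1 1 0)).natDegree
              < (A'.1 0 0).natDegree :=
            Polynomial.natDegree_lt_natDegree hB00ne (lt_of_le_of_lt hq hds)
          have h2 : ((A'.1 0 0 + X*q*(A'.1 0 0 + A'.1 1 0)) + (A'.1 0 0 + A'.1 1 0)).natDegree
              < (A'.1 1 0).natDegree := by
            rcases eq_or_ne ((A'.1 0 0 + X*q*(A'.1 0 0 + A'.1 1 0)) + (A'.1 0 0 + A'.1 1 0)) 0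
              with h | h
            · rw [h, Polynomial.natDegree_zero]
              exact natDeg_pos hc0 hc
            · apply Polynomial.natDegree_lt_natDegree h
              calc ((A'.1 0 0 + X*q*(A'.1 0 0 + A'.1 1 0)) + (A'.1 0 0 + A'.1 1 0)).degree
                  ≤ max (A'.1 0 0 + X*q*(A'.1 0 0 + A'.1 1 0)).degree
                    (A'.1 0 0 + A'.1 1 0).degree := Polynomial.degree_add_le _ _
                _ ≤ (A'.1 0 0 + A'.1 1 0).degree := max_le hq le_rfl
                _ < (A'.1 0 0).degree := hds
                _ = (A'.1 1 0).degree := heq.symm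
          omega
        · -- deg a < deg c : use lower elementary
          obtain ⟨q, hq⟩ := reduce (A'.1 1 0) ha
          refine step 2 (elLow PP (X*q)) (mem_conjC2.mpr ⟨q, rfl⟩) ?_
          have e00 : (elLow PP (X*q) * A').1 0 0 = A'.1 0 0 := by
            rw [entry00 PP (elLow PP (X*q)) A', gL00, gL01, one_mul, zero_mul, add_zero]
          have e10 : (elLow PP (X*q) * A').1 1 0 = A'.1 1 0 + X*q*(A'.1 0 0) := by
            rw [entry10 PP (elLow PP (X*q)) A', gL10, gL11, one_mul]; ring
          rw [e00, e10]
          have h1 : (A'.1 1 0 + X*q*(A'.1 0 0)).natDegree ≤ (A'.1 0 0).natDegree :=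
            Polynomial.natDegree_le_natDegree hq
          have h2 : (A'.1 0 0).natDegree < (A'.1 1 0).natDegree :=
            Polynomial.natDegree_lt_natDegree ha hgt
          omega
  intro A
  obtain ⟨w, hw⟩ := key _ A le_rfl
  exact ⟨w, hw⟩

end Paper
open Paper in
/-- `K(𝔽₂)`, the subgroup of matrices of `SL₂(𝔽₂[t])` congruent to the identity modulo `t`,
is the free product of the three subgroups `m(s)·C·m(s)⁻¹`, `s ∈ ℙ¹(𝔽₂) = {0, 1, ∞}`: the
natural homomorphism from their free product, induced by the inclusions, is an isomorphism. -/
theorem free_product_congruence_subgroup :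
    Function.Bijective
      (Monoid.CoprodI.lift (fun i : Fin 3 =>
        ((Subgroup.inclusion (conjC_le_Ksub i)) : ↥(conjC i) →* ↥Ksub))) := by
  exact ⟨Paper.lift_injective, Paper.lift_surjective⟩
end
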